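/- arXiv:2107.08135 — 7 statements merged into one kernel-verified Lean document; each statement's English description precedes it below -/
import Mathlib

section
/- Let (X, U, Y) be random variables, h*(u) := E[Y | U = u] with h*(U) square-integrable, and f*(x) := E[h*(U) | X = x]. Let ℱ be a set of measurable functions 𝒳 → ℝ with square-integrable f(X) containing f*, and ℋ a set of measurable functions 𝒰 → ℝ with square-integrable h(U) containing h*. Then for every w ∈ (0, 1): E[(f*(X) − h*(U))²] ≤ inf over (f, h) ∈ ℱ × ℋ of [ (1/w)·E[(f(X) − h(U))²] + (1/(1−w))·E[(h(U) − h*(U))²] ] ≤ (1/w)·E[(f*(X) − h*(U))²]. -/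
open MeasureTheory

/-- Product of two L² functions is integrable. -/
lemma memLp2_integrable_mul {Ω : Type*} [MeasurableSpace Ω] {μ : Measure Ω}
    {f g : Ω → ℝ} (hf : MemLp f 2 μ) (hg : MemLp g 2 μ) :
    Integrable (fun ω => f ω * g ω) μ := by
  refine Integrable.mono' ((hf.integrable_sq.add hg.integrable_sq).const_mul (1/2))
    (hf.1.mul hg.1) ?_
  filter_upwards with ω
  have := sq_nonneg (|f ω| - |g ω|)
  have h1 : |f ω| ^ 2 = f ω ^ 2 := sq_abs _
  have h2 : |g ω| ^ 2 = g ω ^ 2 := sq_abs _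
  have h3 : |f ω * g ω| = |f ω| * |g ω| := abs_mul _ _
  rw [Real.norm_eq_abs, h3]
  simp only [Pi.add_apply]
  nlinarith [sq_nonneg (|f ω| - |g ω|), sq_abs (f ω), sq_abs (g ω)]

/-- L² projection property of conditional expectation. -/
lemma condexp_proj_sq_le {Ω : Type*} {m0 : MeasurableSpace Ω} (μ : Measure Ω)
    [IsProbabilityMeasure μ] {m : MeasurableSpace Ω} (hm : m ≤ m0)
    {Z b a : Ω → ℝ} (hZ : MemLp Z 2 μ) (hb : MemLp b 2 μ) (ha : MemLp a 2 μ)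
    (hb_meas : StronglyMeasurable[m] b) (ha_meas : StronglyMeasurable[m] a)
    (hproj : b =ᵐ[μ] μ[Z|m]) :
    ∫ ω, (b ω - Z ω) ^ 2 ∂μ ≤ ∫ ω, (a ω - Z ω) ^ 2 ∂μ := by
  set g : Ω → ℝ := fun ω => a ω - b ω with hg_def
  have hg2 : MemLp g 2 μ := ha.sub hb
  have hg_meas : StronglyMeasurable[m] g := ha_meas.sub hb_meas
  -- cross term is zero
  have hZint : Integrable Z μ := hZ.integrable (by norm_num)
  have hgZ : Integrable (fun ω => g ω * Z ω) μ := @memLp2_integrable_mul Ω m0 μ _ _ hg2 hZ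
  have hgb : Integrable (fun ω => g ω * b ω) μ := @memLp2_integrable_mul Ω m0 μ _ _ hg2 hb
  have hpull : μ[(fun ω => g ω * Z ω)|m] =ᵐ[μ] fun ω => g ω * (μ[Z|m]) ω := by
    have := condExp_mul_of_stronglyMeasurable_left (μ := μ) hg_meas (g := Z) hgZ hZint
    filter_upwards [this] with ω hω using hω
  have hcross : ∫ ω, g ω * Z ω ∂μ = ∫ ω, g ω * b ω ∂μ := by
    rw [← integral_condExp hm (f := fun ω => g ω * Z ω)]
    refine integral_congr_ae ?_
    filter_upwards [hpull, hproj] with ω h1 h2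
    rw [h1, ← h2]
  have hcross0 : ∫ ω, g ω * (b ω - Z ω) ∂μ = 0 := by
    have : (fun ω => g ω * (b ω - Z ω)) = fun ω => g ω * b ω - g ω * Z ω := by
      funext ω; ring
    rw [this, integral_sub hgb hgZ, hcross, sub_self]
  -- expansion
  have hexp : ∀ ω, (a ω - Z ω) ^ 2 = g ω ^ 2 + 2 * (g ω * (b ω - Z ω)) + (b ω - Z ω) ^ 2 := by
    intro ω; simp only [hg_def]; ring
  have hint1 : Integrable (fun ω => g ω ^ 2) μ := hg2.integrable_sq
  have hint2 : Integrable (fun ω => 2 * (g ω * (b ω - Z ω))) μ :=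
    (@memLp2_integrable_mul Ω m0 μ _ _ hg2 (hb.sub hZ)).const_mul 2
  have hint3 : Integrable (fun ω => (b ω - Z ω) ^ 2) μ := (hb.sub hZ).integrable_sq
  calc ∫ ω, (b ω - Z ω) ^ 2 ∂μ
      ≤ ∫ ω, g ω ^ 2 ∂μ + (2 * ∫ ω, g ω * (b ω - Z ω) ∂μ + ∫ ω, (b ω - Z ω) ^ 2 ∂μ) := by
        rw [hcross0]
        have : 0 ≤ ∫ ω, g ω ^ 2 ∂μ := integral_nonneg fun ω => sq_nonneg _
        linarith
    _ = ∫ ω, (a ω - Z ω) ^ 2 ∂μ := by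
        have heq : ∫ ω, (a ω - Z ω) ^ 2 ∂μ
            = ∫ ω, (g ω ^ 2 + (2 * (g ω * (b ω - Z ω)) + (b ω - Z ω) ^ 2)) ∂μ :=
          integral_congr_ae (Filter.Eventually.of_forall fun ω => by
            simp only; rw [hexp ω]; ring)
        have e1 : ∫ ω, (g ω ^ 2 + (2 * (g ω * (b ω - Z ω)) + (b ω - Z ω) ^ 2)) ∂μ
            = ∫ ω, g ω ^ 2 ∂μ + ∫ ω, (2 * (g ω * (b ω - Z ω)) + (b ω - Z ω) ^ 2) ∂μ :=
          integral_add hint1 (hint2.add hint3)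
        have e2 : ∫ ω, (2 * (g ω * (b ω - Z ω)) + (b ω - Z ω) ^ 2) ∂μ
            = ∫ ω, 2 * (g ω * (b ω - Z ω)) ∂μ + ∫ ω, (b ω - Z ω) ^ 2 ∂μ :=
          integral_add hint2 hint3
        rw [heq, e1, e2, integral_const_mul]

/-- sandwich bound for the inner infimum, proof of Theorem 3.
With `h*(u) := E[Y | U = u]`, `f*(x) := E[h*(U) | X = x]`, `f* ∈ ℱ`, `h* ∈ ℋ`, for every
`w ∈ (0,1)`:
`E[(f*(X) − h*(U))²] ≤ inf_{(f,h) ∈ ℱ×ℋ} Q(w,f,h) ≤ (1/w)·E[(f*(X) − h*(U))²]`,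
where `Q(w,f,h) := (1/w)·E[(f(X) − h(U))²] + (1/(1−w))·E[(h(U) − h*(U))²]`. -/
theorem Q_inf_sandwich
    {Ω : Type*} [MeasurableSpace Ω] (μ : Measure Ω) [IsProbabilityMeasure μ]
    {dX dU : ℕ}
    (X : Ω → (Fin dX → ℝ)) (U : Ω → (Fin dU → ℝ)) (Y : Ω → ℝ)
    (hX : Measurable X) (hU : Measurable U) (hY : Measurable Y)
    (hstar : (Fin dU → ℝ) → ℝ)
    (hhstar : (fun ω => hstar (U ω)) =ᵐ[μ] μ[Y | MeasurableSpace.comap U inferInstance])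
    (hhstar2 : MemLp (fun ω => hstar (U ω)) 2 μ)
    (fstar : (Fin dX → ℝ) → ℝ)
    (hfstar : (fun ω => fstar (X ω))
      =ᵐ[μ] μ[fun ω => hstar (U ω) | MeasurableSpace.comap X inferInstance])
    (hfstar2 : MemLp (fun ω => fstar (X ω)) 2 μ)
    (F : Set ((Fin dX → ℝ) → ℝ)) (H : Set ((Fin dU → ℝ) → ℝ))
    (hF : ∀ f ∈ F, Measurable f ∧ MemLp (fun ω => f (X ω)) 2 μ)
    (hH : ∀ h ∈ H, Measurable h ∧ MemLp (fun ω => h (U ω)) 2 μ)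
    (hfstarF : fstar ∈ F) (hhstarH : hstar ∈ H)
    (w : ℝ) (hw : w ∈ Set.Ioo (0 : ℝ) 1) :
    (∫ ω, (fstar (X ω) - hstar (U ω)) ^ 2 ∂μ
        ≤ ⨅ p : F × H,
            (1 / w) * ∫ ω, ((p.1 : (Fin dX → ℝ) → ℝ) (X ω)
                - (p.2 : (Fin dU → ℝ) → ℝ) (U ω)) ^ 2 ∂μ
              + (1 / (1 - w)) * ∫ ω, ((p.2 : (Fin dU → ℝ) → ℝ) (U ω)
                - hstar (U ω)) ^ 2 ∂μ)
    ∧ (⨅ p : F × H,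
            (1 / w) * ∫ ω, ((p.1 : (Fin dX → ℝ) → ℝ) (X ω)
                - (p.2 : (Fin dU → ℝ) → ℝ) (U ω)) ^ 2 ∂μ
              + (1 / (1 - w)) * ∫ ω, ((p.2 : (Fin dU → ℝ) → ℝ) (U ω)
                - hstar (U ω)) ^ 2 ∂μ)
        ≤ (1 / w) * ∫ ω, (fstar (X ω) - hstar (U ω)) ^ 2 ∂μ := by
  obtain ⟨hw0, hw1⟩ := hw
  have hw1' : (0:ℝ) < 1 - w := by linarith
  have hne : Nonempty (F × H) := ⟨⟨⟨fstar, hfstarF⟩, ⟨hstar, hhstarH⟩⟩⟩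
  set I : ℝ := ∫ ω, (fstar (X ω) - hstar (U ω)) ^ 2 ∂μ with hI
  have hm : MeasurableSpace.comap X inferInstance ≤ (inferInstance : MeasurableSpace Ω) :=
    hX.comap_le
  -- lower bound for each p
  have hlow : ∀ p : F × H,
      I ≤ (1 / w) * ∫ ω, ((p.1 : (Fin dX → ℝ) → ℝ) (X ω)
              - (p.2 : (Fin dU → ℝ) → ℝ) (U ω)) ^ 2 ∂μ
            + (1 / (1 - w)) * ∫ ω, ((p.2 : (Fin dU → ℝ) → ℝ) (U ω) - hstar (U ω)) ^ 2 ∂μ := by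
    rintro ⟨⟨f, hfF⟩, ⟨h, hhH⟩⟩
    obtain ⟨hf_meas, hf2⟩ := hF f hfF
    obtain ⟨hh_meas, hh2⟩ := hH h hhH
    simp only
    -- step 1: projection
    have hXm : Measurable[MeasurableSpace.comap X inferInstance] X :=
      Measurable.of_comap_le le_rfl
    have hfX_meas : StronglyMeasurable[MeasurableSpace.comap X inferInstance]
        fun ω => f (X ω) := (hf_meas.comp hXm).stronglyMeasurable
    have hfstarX_meas : StronglyMeasurable[MeasurableSpace.comap X inferInstance]
        fun ω => fstar (X ω) := by
      obtain ⟨hfs_meas, _⟩ := hF fstar hfstarF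
      exact (hfs_meas.comp hXm).stronglyMeasurable
    have step1 : I ≤ ∫ ω, (f (X ω) - hstar (U ω)) ^ 2 ∂μ :=
      condexp_proj_sq_le μ hm hhstar2 hfstar2 hf2 hfstarX_meas hfX_meas hfstar
    -- step 2: weighted split, pointwise
    have key : ∀ A B : ℝ, (A + B) ^ 2 ≤ (1 / w) * A ^ 2 + (1 / (1 - w)) * B ^ 2 := by
      intro A B
      rw [div_mul_eq_mul_div, div_mul_eq_mul_div, div_add_div _ _ (ne_of_gt hw0)
        (ne_of_gt hw1'), le_div_iff₀ (by positivity)]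
      nlinarith [sq_nonneg ((1 - w) * A - w * B)]
    have hptwise : ∀ ω, (f (X ω) - hstar (U ω)) ^ 2
        ≤ (1 / w) * (f (X ω) - h (U ω)) ^ 2 + (1 / (1 - w)) * (h (U ω) - hstar (U ω)) ^ 2 := by
      intro ω
      have := key (f (X ω) - h (U ω)) (h (U ω) - hstar (U ω))
      rwa [sub_add_sub_cancel] at this
    have hint1 : Integrable (fun ω => (f (X ω) - h (U ω)) ^ 2) μ :=
      (hf2.sub hh2).integrable_sq
    have hint2 : Integrable (fun ω => (h (U ω) - hstar (U ω)) ^ 2) μ :=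
      (hh2.sub hhstar2).integrable_sq
    have step2 : ∫ ω, (f (X ω) - hstar (U ω)) ^ 2 ∂μ
        ≤ (1 / w) * ∫ ω, (f (X ω) - h (U ω)) ^ 2 ∂μ
          + (1 / (1 - w)) * ∫ ω, (h (U ω) - hstar (U ω)) ^ 2 ∂μ := by
      rw [← integral_const_mul, ← integral_const_mul,
        ← integral_add (hint1.const_mul _) (hint2.const_mul _)]
      exact integral_mono (hf2.sub hhstar2).integrable_sq
        ((hint1.const_mul _).add (hint2.const_mul _)) hptwise
    linarith
  constructor
  · exact le_ciInf hlow
  · have hbdd : BddBelow (Set.range fun p : F × H =>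
        (1 / w) * ∫ ω, ((p.1 : (Fin dX → ℝ) → ℝ) (X ω)
            - (p.2 : (Fin dU → ℝ) → ℝ) (U ω)) ^ 2 ∂μ
          + (1 / (1 - w)) * ∫ ω, ((p.2 : (Fin dU → ℝ) → ℝ) (U ω) - hstar (U ω)) ^ 2 ∂μ) := by
      refine ⟨0, ?_⟩
      rintro x ⟨p, rfl⟩
      have h1 : 0 ≤ ∫ ω, ((p.1 : (Fin dX → ℝ) → ℝ) (X ω)
          - (p.2 : (Fin dU → ℝ) → ℝ) (U ω)) ^ 2 ∂μ := integral_nonneg fun ω => sq_nonneg _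
      have h2 : 0 ≤ ∫ ω, ((p.2 : (Fin dU → ℝ) → ℝ) (U ω) - hstar (U ω)) ^ 2 ∂μ :=
        integral_nonneg fun ω => sq_nonneg _
      positivity
    have := ciInf_le hbdd ((⟨fstar, hfstarF⟩, ⟨hstar, hhstarH⟩) : F × H)
    refine this.trans ?_
    simp only
    have : ∫ ω, (hstar (U ω) - hstar (U ω)) ^ 2 ∂μ = 0 := by simp
    rw [this, mul_zero, add_zero]
end

section
/- Let (X, U, Y) be random variables with Y square-integrable, h*(u) := E[Y | U = u], and f*(x) := E[h*(U) | X = x]. Let ℱ be a set of measurable functions 𝒳 → ℝ with square-integrable f(X) containing f*, and ℋ a set of measurable functions 𝒰 → ℝ with square-integrable h(U) containing h*. Define J_w(f, h) := (1/w)·E[(f(X) − h(U))²] + (1/(1−w))·E[(h(U) − Y)²]. Suppose for each w ∈ (0, 1) there exists a minimizer (f_w, h_w) of J_w over ℱ × ℋ. Then E[(f_w(X) − f*(X))²] → 0 and E[(h_w(U) − h*(U))²] → 0 as w ↑ 1. -/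
open MeasureTheory Filter

section Aux

variable {α : Type*} {m m0 : MeasurableSpace α} {μ : Measure α}

lemma myIntMul {f g : α → ℝ} (hf : MemLp f 2 μ) (hg : MemLp g 2 μ) :
    Integrable (fun ω => f ω * g ω) μ := by
  have h : MemLp (g • f) 1 μ := hf.smul hg
  rw [memLp_one_iff_integrable] at h
  exact h.congr (Filter.Eventually.of_forall fun ω => by
    simp [Pi.smul_apply, smul_eq_mul, mul_comm])

lemma myMemL2Condexp (hm : m ≤ m0) [IsFiniteMeasure μ]
    {Z : α → ℝ} (hZ : MemLp Z 2 μ) : MemLp (μ[Z|m]) 2 μ := by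
  set G : Lp ℝ 2 μ := ↑(condExpL2 ℝ ℝ hm (hZ.toLp Z)) with hG
  have h : ⇑G =ᵐ[μ] μ[Z|m] := by
    refine ae_eq_condExp_of_forall_setIntegral_eq hm (hZ.integrable one_le_two)
      (fun s hs hμs => ?_) (fun s hs hμs => ?_) ?_
    · have := integrableOn_condExpL2_of_measure_ne_top (𝕜 := ℝ) hm hμs.ne (hZ.toLp Z)
      exact this
    · have h2 := integral_condExpL2_eq (𝕜 := ℝ) hm (hZ.toLp Z) hs hμs.ne
      rw [h2]
      exact setIntegral_congr_ae (hm s hs) (hZ.coeFn_toLp.mono fun x hx _ => hx)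
    · have := aestronglyMeasurable_condExpL2 (𝕜 := ℝ) hm (hZ.toLp Z)
      exact this
  exact (Lp.memLp G).ae_eq h

lemma myOrth (hm : m ≤ m0) [IsFiniteMeasure μ]
    {g Z W : α → ℝ} (hgm : StronglyMeasurable[m] g) (hg : MemLp g 2 μ)
    (hZ : MemLp Z 2 μ) (hWc : W =ᵐ[μ] μ[Z|m]) :
    ∫ ω, g ω * (Z ω - W ω) ∂μ = 0 := by
  have hgZ : Integrable (fun ω => g ω * Z ω) μ := myIntMul hg hZ
  have hgZ' : Integrable (g * Z) μ := hgZ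
  have hmul : μ[g * Z|m] =ᵐ[μ] g * μ[Z|m] :=
    condExp_mul_of_stronglyMeasurable_left hgm hgZ' (hZ.integrable one_le_two)
  have hcong : μ[g * Z|m] =ᵐ[μ] fun ω => g ω * W ω :=
    hmul.trans (hWc.mono fun ω hω => by simp [Pi.mul_apply, hω])
  have hgW : Integrable (fun ω => g ω * W ω) μ := integrable_condExp.congr hcong
  have h1 : ∫ ω, g ω * (Z ω - W ω) ∂μ = ∫ ω, g ω * Z ω ∂μ - ∫ ω, g ω * W ω ∂μ := by
    rw [← integral_sub hgZ hgW]
    exact integral_congr_ae (Filter.Eventually.of_forall fun ω => by ring)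
  have h2 : ∫ ω, g ω * Z ω ∂μ = ∫ ω, g ω * W ω ∂μ := by
    rw [← integral_congr_ae hcong, integral_condExp hm]
    exact integral_congr_ae (Filter.Eventually.of_forall fun ω => rfl)
  rw [h1, h2, sub_self]

lemma myPyth (hm : m ≤ m0) [IsFiniteMeasure μ]
    {V W Z : α → ℝ} (hVm : StronglyMeasurable[m] V) (hV : MemLp V 2 μ)
    (hWm : StronglyMeasurable[m] W) (hW : MemLp W 2 μ) (hZ : MemLp Z 2 μ)
    (hWc : W =ᵐ[μ] μ[Z|m]) :
    ∫ ω, (V ω - Z ω) ^ 2 ∂μ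
      = ∫ ω, (V ω - W ω) ^ 2 ∂μ + ∫ ω, (W ω - Z ω) ^ 2 ∂μ := by
  have hgm : StronglyMeasurable[m] (fun ω => V ω - W ω) := hVm.sub hWm
  have h0 : ∫ ω, (V ω - W ω) * (Z ω - W ω) ∂μ = 0 :=
    myOrth hm hgm (hV.sub hW) hZ hWc
  have hiVW : Integrable (fun ω => (V ω - W ω) ^ 2) μ := (hV.sub hW).integrable_sq
  have hiWZ : Integrable (fun ω => (W ω - Z ω) ^ 2) μ := (hW.sub hZ).integrable_sq
  have hiAdd : Integrable (fun ω => (V ω - W ω) ^ 2 + (W ω - Z ω) ^ 2) μ := hiVW.add hiWZ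
  have hiC : Integrable (fun ω => (V ω - W ω) * (Z ω - W ω)) μ :=
    myIntMul (hV.sub hW) (hZ.sub hW)
  have hiC2 : Integrable (fun ω => 2 * ((V ω - W ω) * (Z ω - W ω))) μ := hiC.const_mul 2
  have hptw : (fun ω => (V ω - Z ω) ^ 2)
      = fun ω => ((V ω - W ω) ^ 2 + (W ω - Z ω) ^ 2)
          - 2 * ((V ω - W ω) * (Z ω - W ω)) := by
    funext ω; ring
  rw [hptw, integral_sub hiAdd hiC2, integral_add hiVW hiWZ, integral_const_mul, h0]
  ring

lemma myNsq {f g : α → ℝ} (hf : MemLp f 2 μ) (hg : MemLp g 2 μ) :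
    ∫ ω, (f ω - g ω) ^ 2 ∂μ = ‖hf.toLp f - hg.toLp g‖ ^ 2 := by
  set P := hf.toLp f - hg.toLp g with hP
  have hPc : ⇑P =ᵐ[μ] fun ω => f ω - g ω :=
    (Lp.coeFn_sub _ _).trans (hf.coeFn_toLp.sub hg.coeFn_toLp)
  have h1 : ‖P‖ ^ 2 = (inner ℝ P P : ℝ) := (real_inner_self_eq_norm_sq P).symm
  rw [h1, L2.inner_def]
  refine integral_congr_ae (hPc.mono fun ω hω => ?_) |>.symm
  simp only [RCLike.inner_apply, conj_trivial, hω]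
  ring

lemma myNum {p q c e r t s : ℝ} (hp0 : 0 ≤ p) (hq0 : 0 ≤ q) (hc0 : 0 ≤ c)
    (he0 : 0 ≤ e) (hr0 : 0 ≤ r) (ht0 : 0 ≤ t) (hsnn : 0 ≤ s)
    (f1 : p ^ 2 + q ^ 2 ≤ c ^ 2) (f3 : c ≤ r + q + e) (f4 : t ≤ p + r)
    (f2 : r ^ 2 ≤ e ^ 2) (f5 : e ^ 2 ≤ (s * c) ^ 2) :
    t ^ 2 ≤ 8 * s * c ^ 2 + 10 * s ^ 2 * c ^ 2 := by
  have hre : r ≤ e := by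
    rw [← Real.sqrt_sq hr0, ← Real.sqrt_sq he0]
    exact Real.sqrt_le_sqrt f2
  have hesc : e ≤ s * c := by
    rw [← Real.sqrt_sq he0, ← Real.sqrt_sq (mul_nonneg hsnn hc0)]
    exact Real.sqrt_le_sqrt f5
  have hqc : q ≤ c := by
    have h1 : q ^ 2 ≤ c ^ 2 := by nlinarith [sq_nonneg p]
    rw [← Real.sqrt_sq hq0, ← Real.sqrt_sq hc0]
    exact Real.sqrt_le_sqrt h1
  have hqe : c ≤ q + 2 * e := by linarith
  have hcq2 : c ^ 2 ≤ (q + 2 * e) ^ 2 := by nlinarith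
  have hp2 : p ^ 2 ≤ 4 * e * c + 4 * e ^ 2 := by
    nlinarith [mul_le_mul_of_nonneg_left hqc (by positivity : (0:ℝ) ≤ 4 * e)]
  have ht2 : t ^ 2 ≤ 2 * p ^ 2 + 2 * e ^ 2 := by nlinarith [sq_nonneg (p - e)]
  have hfin : t ^ 2 ≤ 8 * e * c + 10 * e ^ 2 := by linarith
  have h8 : 8 * e * c ≤ 8 * s * c ^ 2 := by
    nlinarith [mul_le_mul_of_nonneg_right hesc hc0]
  have h10 : e ^ 2 ≤ s ^ 2 * c ^ 2 := by nlinarith [mul_self_le_mul_self he0 hesc]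
  nlinarith [h8, h10, hfin]

end Aux

/-- Theorem 3 of the paper: Joint-RR converges to 2Step-RR as `w ↑ 1`.
With `h*(u) := E[Y | U = u]`, `f*(x) := E[h*(U) | X = x]`, `f* ∈ ℱ`, `h* ∈ ℋ`, if
`(f_w, h_w)` minimizes `J_w(f, h) := (1/w)·E[(f(X) − h(U))²] + (1/(1−w))·E[(h(U) − Y)²]`
over `ℱ × ℋ` for each `w ∈ (0,1)`, then `E[(f_w(X) − f*(X))²] → 0` and
`E[(h_w(U) − h*(U))²] → 0` as `w ↑ 1`. -/
theorem jointRR_tendsto_twoStepRR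
    {Ω : Type*} [MeasurableSpace Ω] (μ : Measure Ω) [IsProbabilityMeasure μ]
    {dX dU : ℕ}
    (X : Ω → (Fin dX → ℝ)) (U : Ω → (Fin dU → ℝ)) (Y : Ω → ℝ)
    (hX : Measurable X) (hU : Measurable U) (hY : Measurable Y)
    (hY2 : MemLp Y 2 μ)
    (hstar : (Fin dU → ℝ) → ℝ)
    (hhstar : (fun ω => hstar (U ω)) =ᵐ[μ] μ[Y | MeasurableSpace.comap U inferInstance])
    (hhstar2 : MemLp (fun ω => hstar (U ω)) 2 μ)
    (fstar : (Fin dX → ℝ) → ℝ)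
    (hfstar : (fun ω => fstar (X ω))
      =ᵐ[μ] μ[fun ω => hstar (U ω) | MeasurableSpace.comap X inferInstance])
    (hfstar2 : MemLp (fun ω => fstar (X ω)) 2 μ)
    (F : Set ((Fin dX → ℝ) → ℝ)) (H : Set ((Fin dU → ℝ) → ℝ))
    (hF : ∀ f ∈ F, Measurable f ∧ MemLp (fun ω => f (X ω)) 2 μ)
    (hH : ∀ h ∈ H, Measurable h ∧ MemLp (fun ω => h (U ω)) 2 μ)
    (hfstarF : fstar ∈ F) (hhstarH : hstar ∈ H)
    (fw : ℝ → (Fin dX → ℝ) → ℝ) (hw : ℝ → (Fin dU → ℝ) → ℝ)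
    (hmem : ∀ w ∈ Set.Ioo (0 : ℝ) 1, fw w ∈ F ∧ hw w ∈ H)
    (hmin : ∀ w ∈ Set.Ioo (0 : ℝ) 1, ∀ f ∈ F, ∀ h ∈ H,
      (1 / w) * ∫ ω, (fw w (X ω) - hw w (U ω)) ^ 2 ∂μ
          + (1 / (1 - w)) * ∫ ω, (hw w (U ω) - Y ω) ^ 2 ∂μ
        ≤ (1 / w) * ∫ ω, (f (X ω) - h (U ω)) ^ 2 ∂μ
          + (1 / (1 - w)) * ∫ ω, (h (U ω) - Y ω) ^ 2 ∂μ) :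
    Tendsto (fun w => ∫ ω, (fw w (X ω) - fstar (X ω)) ^ 2 ∂μ)
        (nhdsWithin 1 (Set.Ioo (0 : ℝ) 1)) (nhds 0)
    ∧ Tendsto (fun w => ∫ ω, (hw w (U ω) - hstar (U ω)) ^ 2 ∂μ)
        (nhdsWithin 1 (Set.Ioo (0 : ℝ) 1)) (nhds 0) := by
  have hmU : MeasurableSpace.comap U inferInstance ≤ ‹MeasurableSpace Ω› := hU.comap_le
  have hmX : MeasurableSpace.comap X inferInstance ≤ ‹MeasurableSpace Ω› := hX.comap_le
  set C : ℝ := ∫ ω, (fstar (X ω) - hstar (U ω)) ^ 2 ∂μ with hCdef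
  have key : ∀ w ∈ Set.Ioo (0 : ℝ) 1,
      (∫ ω, (hw w (U ω) - hstar (U ω)) ^ 2 ∂μ) ≤ ((1 - w) / w) * C ∧
      (∫ ω, (fw w (X ω) - fstar (X ω)) ^ 2 ∂μ)
        ≤ 8 * Real.sqrt ((1 - w) / w) * C + 10 * ((1 - w) / w) * C := by
    rintro w ⟨hw0, hw1⟩
    obtain ⟨hfwF, hhwH⟩ := hmem w ⟨hw0, hw1⟩
    have hFw2 : MemLp (fun ω => fw w (X ω)) 2 μ := (hF _ hfwF).2
    have hHw2 : MemLp (fun ω => hw w (U ω)) 2 μ := (hH _ hhwH).2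
    have hUc : Measurable[MeasurableSpace.comap U inferInstance] U :=
      Measurable.of_comap_le le_rfl
    have hXc : Measurable[MeasurableSpace.comap X inferInstance] X :=
      Measurable.of_comap_le le_rfl
    have hHwm : StronglyMeasurable[MeasurableSpace.comap U inferInstance]
        (fun ω => hw w (U ω)) := ((hH _ hhwH).1.comp hUc).stronglyMeasurable
    have hHsm : StronglyMeasurable[MeasurableSpace.comap U inferInstance]
        (fun ω => hstar (U ω)) := ((hH _ hhstarH).1.comp hUc).stronglyMeasurable
    have hFwm : StronglyMeasurable[MeasurableSpace.comap X inferInstance]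
        (fun ω => fw w (X ω)) := ((hF _ hfwF).1.comp hXc).stronglyMeasurable
    -- Pythagoras for Y over m_U
    have hB : ∫ ω, (hw w (U ω) - Y ω) ^ 2 ∂μ
        = (∫ ω, (hw w (U ω) - hstar (U ω)) ^ 2 ∂μ)
          + ∫ ω, (hstar (U ω) - Y ω) ^ 2 ∂μ :=
      myPyth hmU hHwm hHw2 hHsm hhstar2 hY2 hhstar
    have hMin := hmin w ⟨hw0, hw1⟩ fstar hfstarF hstar hhstarH
    have hAnn : 0 ≤ ∫ ω, (fw w (X ω) - hw w (U ω)) ^ 2 ∂μ :=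
      integral_nonneg fun ω => sq_nonneg _
    have hEnn : 0 ≤ ∫ ω, (hw w (U ω) - hstar (U ω)) ^ 2 ∂μ :=
      integral_nonneg fun ω => sq_nonneg _
    have h1w : 0 < 1 - w := by linarith
    have hiw : 0 < 1 / w := by positivity
    have hi1w : 0 < 1 / (1 - w) := by positivity
    rw [hB] at hMin
    have step : (1 / (1 - w)) * ∫ ω, (hw w (U ω) - hstar (U ω)) ^ 2 ∂μ ≤ (1 / w) * C := by
      nlinarith [mul_nonneg hiw.le hAnn]
    have hEps : (∫ ω, (hw w (U ω) - hstar (U ω)) ^ 2 ∂μ) ≤ ((1 - w) / w) * C := by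
      have h2 := mul_le_mul_of_nonneg_left step h1w.le
      calc (∫ ω, (hw w (U ω) - hstar (U ω)) ^ 2 ∂μ)
          = (1 - w) * ((1 / (1 - w)) * ∫ ω, (hw w (U ω) - hstar (U ω)) ^ 2 ∂μ) := by
            field_simp
        _ ≤ (1 - w) * ((1 / w) * C) := h2
        _ = ((1 - w) / w) * C := by ring
    have hAC : (∫ ω, (fw w (X ω) - hw w (U ω)) ^ 2 ∂μ) ≤ C := by
      have step2 : (1 / w) * (∫ ω, (fw w (X ω) - hw w (U ω)) ^ 2 ∂μ) ≤ (1 / w) * C := by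
        nlinarith [mul_nonneg hi1w.le hEnn]
      exact (mul_le_mul_iff_right₀ hiw).mp step2
    refine ⟨hEps, ?_⟩
    -- f part
    have hg2 : MemLp (μ[(fun ω => hw w (U ω)) | MeasurableSpace.comap X inferInstance]) 2 μ :=
      myMemL2Condexp hmX hHw2
    have hgm : StronglyMeasurable[MeasurableSpace.comap X inferInstance]
        (μ[(fun ω => hw w (U ω)) | MeasurableSpace.comap X inferInstance]) :=
      stronglyMeasurable_condExp
    have hPyth2 : ∫ ω, (fw w (X ω) - hw w (U ω)) ^ 2 ∂μ
        = (∫ ω, (fw w (X ω)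
              - (μ[(fun ω => hw w (U ω)) | MeasurableSpace.comap X inferInstance]) ω) ^ 2 ∂μ)
          + ∫ ω, ((μ[(fun ω => hw w (U ω)) | MeasurableSpace.comap X inferInstance]) ω
              - hw w (U ω)) ^ 2 ∂μ :=
      myPyth hmX hFwm hFw2 hgm hg2 hHw2 Filter.EventuallyEq.rfl
    -- contraction : μ[Δ|m_X]
    have hΔ2 : MemLp (fun ω => hw w (U ω) - hstar (U ω)) 2 μ := hHw2.sub hhstar2
    have hW'2 : MemLp (μ[(fun ω => hw w (U ω) - hstar (U ω))
        | MeasurableSpace.comap X inferInstance]) 2 μ := myMemL2Condexp hmX hΔ2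
    have hPyth3 : ∫ ω, ((0:ℝ) - (hw w (U ω) - hstar (U ω))) ^ 2 ∂μ
        = (∫ ω, ((0:ℝ) - (μ[(fun ω => hw w (U ω) - hstar (U ω))
              | MeasurableSpace.comap X inferInstance]) ω) ^ 2 ∂μ)
          + ∫ ω, ((μ[(fun ω => hw w (U ω) - hstar (U ω))
              | MeasurableSpace.comap X inferInstance]) ω
              - (hw w (U ω) - hstar (U ω))) ^ 2 ∂μ :=
      myPyth hmX stronglyMeasurable_const (memLp_const 0)
        stronglyMeasurable_condExp hW'2 hΔ2 Filter.EventuallyEq.rfl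
    have hW'le : (∫ ω, ((μ[(fun ω => hw w (U ω) - hstar (U ω))
          | MeasurableSpace.comap X inferInstance]) ω) ^ 2 ∂μ)
        ≤ ∫ ω, (hw w (U ω) - hstar (U ω)) ^ 2 ∂μ := by
      have e1 : ∫ ω, ((0:ℝ) - (hw w (U ω) - hstar (U ω))) ^ 2 ∂μ
          = ∫ ω, (hw w (U ω) - hstar (U ω)) ^ 2 ∂μ :=
        integral_congr_ae (Filter.Eventually.of_forall fun ω => by ring)
      have e2 : ∫ ω, ((0:ℝ) - (μ[(fun ω => hw w (U ω) - hstar (U ω))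
            | MeasurableSpace.comap X inferInstance]) ω) ^ 2 ∂μ
          = ∫ ω, ((μ[(fun ω => hw w (U ω) - hstar (U ω))
            | MeasurableSpace.comap X inferInstance]) ω) ^ 2 ∂μ :=
        integral_congr_ae (Filter.Eventually.of_forall fun ω => by ring)
      have e3 : 0 ≤ ∫ ω, ((μ[(fun ω => hw w (U ω) - hstar (U ω))
            | MeasurableSpace.comap X inferInstance]) ω
            - (hw w (U ω) - hstar (U ω))) ^ 2 ∂μ :=
        integral_nonneg fun ω => sq_nonneg _
      rw [e1, e2] at hPyth3
      linarith
    have hsub : (fun ω => (μ[(fun ω => hw w (U ω)) | MeasurableSpace.comap X inferInstance]) ω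
          - fstar (X ω))
        =ᵐ[μ] μ[(fun ω => hw w (U ω) - hstar (U ω)) | MeasurableSpace.comap X inferInstance] := by
      have h1 : μ[(fun ω => hw w (U ω) - hstar (U ω)) | MeasurableSpace.comap X inferInstance]
          =ᵐ[μ] μ[(fun ω => hw w (U ω)) | MeasurableSpace.comap X inferInstance]
            - μ[(fun ω => hstar (U ω)) | MeasurableSpace.comap X inferInstance] :=
        condExp_sub (hHw2.integrable one_le_two) (hhstar2.integrable one_le_two) _
      filter_upwards [h1, hfstar] with ω h1ω h2ω
      rw [h1ω, Pi.sub_apply, h2ω]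
    have hR : (∫ ω, ((μ[(fun ω => hw w (U ω)) | MeasurableSpace.comap X inferInstance]) ω
          - fstar (X ω)) ^ 2 ∂μ)
        ≤ ∫ ω, (hw w (U ω) - hstar (U ω)) ^ 2 ∂μ := by
      have hcg : (fun ω => ((μ[(fun ω => hw w (U ω)) | MeasurableSpace.comap X inferInstance]) ω
            - fstar (X ω)) ^ 2)
          =ᵐ[μ] fun ω => ((μ[(fun ω => hw w (U ω) - hstar (U ω))
            | MeasurableSpace.comap X inferInstance]) ω) ^ 2 := by
        filter_upwards [hsub] with ω hω
        rw [hω]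
      rw [integral_congr_ae hcg]
      exact hW'le
    -- move to Lp norms
    have hN1 := myNsq hFw2 hg2
    have hN2 := myNsq hg2 hHw2
    have hN3 := myNsq hfstar2 hhstar2
    have hN4 := myNsq hHw2 hhstar2
    have hN5 := myNsq hg2 hfstar2
    have hN6 := myNsq hFw2 hfstar2
    have hs2 : Real.sqrt ((1 - w) / w) ^ 2 = (1 - w) / w := Real.sq_sqrt (by positivity)
    have f1 : ‖hFw2.toLp _ - hg2.toLp _‖ ^ 2 + ‖hg2.toLp _ - hHw2.toLp _‖ ^ 2
        ≤ ‖hfstar2.toLp _ - hhstar2.toLp _‖ ^ 2 := by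
      rw [← hN1, ← hN2, ← hN3]
      rw [hN1, hN2] at hPyth2
      linarith [hAC]
    have f2 : ‖hg2.toLp _ - hfstar2.toLp _‖ ^ 2 ≤ ‖hHw2.toLp _ - hhstar2.toLp _‖ ^ 2 := by
      rw [← hN5, ← hN4]
      exact hR
    have f3 : ‖hfstar2.toLp _ - hhstar2.toLp _‖
        ≤ ‖hg2.toLp _ - hfstar2.toLp _‖ + ‖hg2.toLp _ - hHw2.toLp _‖
          + ‖hHw2.toLp _ - hhstar2.toLp _‖ := by
      have h4 := dist_triangle4 (hfstar2.toLp _) (hg2.toLp _) (hHw2.toLp _) (hhstar2.toLp _)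
      simp only [dist_eq_norm] at h4
      calc ‖hfstar2.toLp _ - hhstar2.toLp _‖
          ≤ ‖hfstar2.toLp _ - hg2.toLp _‖ + ‖hg2.toLp _ - hHw2.toLp _‖
            + ‖hHw2.toLp _ - hhstar2.toLp _‖ := h4
        _ = ‖hg2.toLp _ - hfstar2.toLp _‖ + ‖hg2.toLp _ - hHw2.toLp _‖
            + ‖hHw2.toLp _ - hhstar2.toLp _‖ := by rw [norm_sub_rev]
    have f4 : ‖hFw2.toLp _ - hfstar2.toLp _‖
        ≤ ‖hFw2.toLp _ - hg2.toLp _‖ + ‖hg2.toLp _ - hfstar2.toLp _‖ := by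
      have h5 := dist_triangle (hFw2.toLp _) (hg2.toLp _) (hfstar2.toLp _)
      simpa only [dist_eq_norm] using h5
    have f5 : ‖hHw2.toLp _ - hhstar2.toLp _‖ ^ 2
        ≤ (Real.sqrt ((1 - w) / w) * ‖hfstar2.toLp _ - hhstar2.toLp _‖) ^ 2 := by
      rw [mul_pow, hs2, ← hN4, ← hN3]
      exact hEps
    have hnum := myNum (norm_nonneg _) (norm_nonneg _) (norm_nonneg _) (norm_nonneg _)
      (norm_nonneg _) (norm_nonneg _) (Real.sqrt_nonneg _) f1 f3 f4 f2 f5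
    calc (∫ ω, (fw w (X ω) - fstar (X ω)) ^ 2 ∂μ)
        = ‖hFw2.toLp _ - hfstar2.toLp _‖ ^ 2 := hN6
      _ ≤ 8 * Real.sqrt ((1 - w) / w) * ‖hfstar2.toLp _ - hhstar2.toLp _‖ ^ 2
          + 10 * Real.sqrt ((1 - w) / w) ^ 2 * ‖hfstar2.toLp _ - hhstar2.toLp _‖ ^ 2 := hnum
      _ = 8 * Real.sqrt ((1 - w) / w) * C + 10 * ((1 - w) / w) * C := by
          rw [hs2, ← hN3, hCdef]
  -- limits
  have tdiv : Tendsto (fun w : ℝ => (1 - w) / w) (nhds 1) (nhds 0) := by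
    have h : Tendsto (fun w : ℝ => (1 - w) / w) (nhds 1) (nhds ((1 - 1) / 1)) :=
      Tendsto.div (tendsto_const_nhds.sub tendsto_id) tendsto_id one_ne_zero
    simpa using h
  have tb1 : Tendsto (fun w : ℝ => ((1 - w) / w) * C)
      (nhdsWithin 1 (Set.Ioo (0 : ℝ) 1)) (nhds 0) := by
    have h := tdiv.mul_const C
    rw [zero_mul] at h
    exact h.mono_left nhdsWithin_le_nhds
  have tsqrt : Tendsto (fun w : ℝ => Real.sqrt ((1 - w) / w)) (nhds 1) (nhds 0) := by
    have h := (Real.continuous_sqrt.tendsto 0).comp tdiv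
    simpa [Function.comp_def] using h
  have tb2 : Tendsto (fun w : ℝ => 8 * Real.sqrt ((1 - w) / w) * C + 10 * ((1 - w) / w) * C)
      (nhdsWithin 1 (Set.Ioo (0 : ℝ) 1)) (nhds 0) := by
    have h : Tendsto (fun w : ℝ => 8 * Real.sqrt ((1 - w) / w) * C + 10 * ((1 - w) / w) * C)
        (nhds 1) (nhds (8 * 0 * C + 10 * 0 * C)) :=
      ((tsqrt.const_mul 8).mul_const C).add ((tdiv.const_mul 10).mul_const C)
    simp only [mul_zero, zero_mul, add_zero, zero_add] at h
    norm_num at h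
    exact h.mono_left nhdsWithin_le_nhds
  constructor
  · refine squeeze_zero' ?_ ?_ tb2
    · exact Filter.eventually_of_mem self_mem_nhdsWithin fun w _ =>
        integral_nonneg fun ω => sq_nonneg _
    · exact Filter.eventually_of_mem self_mem_nhdsWithin fun w hwm => (key w hwm).2
  · refine squeeze_zero' ?_ ?_ tb1
    · exact Filter.eventually_of_mem self_mem_nhdsWithin fun w _ =>
        integral_nonneg fun ω => sq_nonneg _
    · exact Filter.eventually_of_mem self_mem_nhdsWithin fun w hwm => (key w hwm).1
end

section
/- Let (X, U, Y) be random variables with Y square-integrable, let f : 𝒳 → ℝ with f(X) square-integrable, let w ∈ (0, 1), and define h°(u) := w·E[Y | U = u] + (1−w)·E[f(X) | U = u]. Then for every measurable h : 𝒰 → ℝ with h(U) square-integrable, J_w(f, h) − J_w(f, h°) = (1/(w(1−w)))·E[(h(U) − h°(U))²]. In particular, h° minimizes h ↦ J_w(f, h) over all square-integrable h. -/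
open MeasureTheory

lemma memLp2_mul_integrable {Ω : Type*} {m0 : MeasurableSpace Ω} {μ : Measure Ω}
    {f g : Ω → ℝ} (hf : MemLp f 2 μ) (hg : MemLp g 2 μ) :
    Integrable (fun ω => f ω * g ω) μ := by
  have h : MemLp (f • g) 1 μ := hg.smul (r := 1) hf
  rw [← memLp_one_iff_integrable]
  exact h

lemma ortho_aux {Ω : Type*} {m0 : MeasurableSpace Ω} {μ : Measure Ω} [IsProbabilityMeasure μ]
    {m : MeasurableSpace Ω} (hm : m ≤ m0)
    {g V : Ω → ℝ} (hg : StronglyMeasurable[m] g)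
    (hg2 : MemLp g 2 μ) (hV2 : MemLp V 2 μ) :
    (∫ ω, g ω * V ω ∂μ = ∫ ω, g ω * (μ[V|m]) ω ∂μ)
      ∧ Integrable (fun ω => g ω * (μ[V|m]) ω) μ := by
  have hGV : Integrable (g * V) μ := memLp2_mul_integrable hg2 hV2
  have hpull : μ[g * V|m] =ᵐ[μ] g * μ[V|m] :=
    condExp_mul_of_stronglyMeasurable_left hg hGV (hV2.integrable one_le_two)
  have hint : Integrable (fun ω => g ω * (μ[V|m]) ω) μ := integrable_condExp.congr hpull
  refine ⟨?_, hint⟩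
  calc ∫ ω, g ω * V ω ∂μ = ∫ ω, (μ[g * V|m]) ω ∂μ :=
        (integral_condExp (f := g * V) hm).symm
    _ = ∫ ω, g ω * (μ[V|m]) ω ∂μ := integral_congr_ae hpull


/-- the optimal inner function of Joint-RR.
With `h°(u) := w·E[Y | U = u] + (1−w)·E[f(X) | U = u]`, for every measurable
square-integrable `h`:
`J_w(f, h) − J_w(f, h°) = (1/(w(1−w)))·E[(h(U) − h°(U))²]`;
in particular `h°` minimizes `h ↦ J_w(f, h)`. -/
theorem Jw_inner_optimum
    {Ω : Type*} [MeasurableSpace Ω] (μ : Measure Ω) [IsProbabilityMeasure μ]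
    {dX dU : ℕ}
    (X : Ω → (Fin dX → ℝ)) (U : Ω → (Fin dU → ℝ)) (Y : Ω → ℝ)
    (hX : Measurable X) (hU : Measurable U) (hY : Measurable Y)
    (hY2 : MemLp Y 2 μ)
    (f : (Fin dX → ℝ) → ℝ) (hf : Measurable f)
    (hfX : MemLp (fun ω => f (X ω)) 2 μ)
    (w : ℝ) (hw : w ∈ Set.Ioo (0 : ℝ) 1)
    (hcirc : (Fin dU → ℝ) → ℝ) (hhcirc : Measurable hcirc)
    (hhcirc2 : MemLp (fun ω => hcirc (U ω)) 2 μ)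
    (hcirc_def : (fun ω => hcirc (U ω))
      =ᵐ[μ] fun ω =>
        w * (μ[Y | MeasurableSpace.comap U inferInstance]) ω
          + (1 - w) * (μ[fun ω' => f (X ω') | MeasurableSpace.comap U inferInstance]) ω) :
    ∀ h : (Fin dU → ℝ) → ℝ, Measurable h → MemLp (fun ω => h (U ω)) 2 μ →
      (((1 / w) * ∫ ω, (f (X ω) - h (U ω)) ^ 2 ∂μ
            + (1 / (1 - w)) * ∫ ω, (h (U ω) - Y ω) ^ 2 ∂μ)
          - ((1 / w) * ∫ ω, (f (X ω) - hcirc (U ω)) ^ 2 ∂μ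
            + (1 / (1 - w)) * ∫ ω, (hcirc (U ω) - Y ω) ^ 2 ∂μ)
        = (1 / (w * (1 - w))) * ∫ ω, (h (U ω) - hcirc (U ω)) ^ 2 ∂μ)
      ∧ ((1 / w) * ∫ ω, (f (X ω) - hcirc (U ω)) ^ 2 ∂μ
            + (1 / (1 - w)) * ∫ ω, (hcirc (U ω) - Y ω) ^ 2 ∂μ
          ≤ (1 / w) * ∫ ω, (f (X ω) - h (U ω)) ^ 2 ∂μ
            + (1 / (1 - w)) * ∫ ω, (h (U ω) - Y ω) ^ 2 ∂μ) := by
  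
  obtain ⟨hw0, hw1⟩ := hw
  have hw1' : (0:ℝ) < 1 - w := by linarith
  intro h hh hh2
  set m : MeasurableSpace Ω := MeasurableSpace.comap U inferInstance with hm_def
  have hm : m ≤ _ := hU.comap_le
  set F : Ω → ℝ := fun ω => f (X ω) with hF_def
  set H : Ω → ℝ := fun ω => h (U ω) with hH_def
  set C : Ω → ℝ := fun ω => hcirc (U ω) with hC_def
  set d : Ω → ℝ := fun ω => H ω - C ω with hd_def
  have hUm : Measurable[m] U := Measurable.of_comap_le le_rfl
  have hdm : StronglyMeasurable[m] d :=
    ((hh.comp hUm).sub (hhcirc.comp hUm)).stronglyMeasurable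
  have hd2 : MemLp d 2 μ := hh2.sub hhcirc2
  obtain ⟨hdY, idYa⟩ := ortho_aux hm hdm hd2 hY2
  obtain ⟨hdF, idFb⟩ := ortho_aux hm hdm hd2 hfX
  set a : Ω → ℝ := μ[Y|m] with ha_def
  set b : Ω → ℝ := μ[fun ω' => f (X ω')|m] with hb_def
  -- integrabilities
  have i1 : Integrable (fun ω => (F ω - C ω)^2) μ := (hfX.sub hhcirc2).integrable_sq
  have i2 : Integrable (fun ω => (H ω - C ω)^2) μ := (hh2.sub hhcirc2).integrable_sq
  have i3 : Integrable (fun ω => d ω * F ω) μ := memLp2_mul_integrable hd2 hfX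
  have i4 : Integrable (fun ω => d ω * C ω) μ := memLp2_mul_integrable hd2 hhcirc2
  have i5 : Integrable (fun ω => d ω * Y ω) μ := memLp2_mul_integrable hd2 hY2
  have i6 : Integrable (fun ω => (C ω - Y ω)^2) μ := (hhcirc2.sub hY2).integrable_sq
  -- ∫ d·C in terms of P and Q
  have hdC : ∫ ω, d ω * C ω ∂μ
      = w * ∫ ω, d ω * a ω ∂μ + (1 - w) * ∫ ω, d ω * b ω ∂μ := by
    have h1 : (fun ω => d ω * C ω)
        =ᵐ[μ] fun ω => w * (d ω * a ω) + (1 - w) * (d ω * b ω) := by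
      filter_upwards [hcirc_def] with ω hω
      rw [hω]; ring
    have ia : Integrable (fun ω => w * (d ω * a ω)) μ := idYa.const_mul w
    have ib : Integrable (fun ω => (1 - w) * (d ω * b ω)) μ := idFb.const_mul (1 - w)
    rw [integral_congr_ae h1, integral_add ia ib, integral_const_mul, integral_const_mul]
  -- expansion identities
  have eqA : ∫ ω, (F ω - H ω) ^ 2 ∂μ
      = ∫ ω, (F ω - C ω) ^ 2 ∂μ + (∫ ω, (H ω - C ω) ^ 2 ∂μ
          - (2 * ∫ ω, d ω * F ω ∂μ - 2 * ∫ ω, d ω * C ω ∂μ)) := by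
    have hpt : (fun ω => (F ω - H ω) ^ 2)
        = fun ω => (F ω - C ω) ^ 2
            + ((H ω - C ω) ^ 2 - (2 * (d ω * F ω) - 2 * (d ω * C ω))) := by
      funext ω; simp only [hd_def]; ring
    have i9 : Integrable (fun ω => 2 * (d ω * F ω) - 2 * (d ω * C ω)) μ :=
      (i3.const_mul 2).sub (i4.const_mul 2)
    have i7 : Integrable
        (fun ω => (H ω - C ω) ^ 2 - (2 * (d ω * F ω) - 2 * (d ω * C ω))) μ := i2.sub i9
    have iF2 : Integrable (fun ω => 2 * (d ω * F ω)) μ := i3.const_mul 2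
    have iC2 : Integrable (fun ω => 2 * (d ω * C ω)) μ := i4.const_mul 2
    rw [hpt, integral_add i1 i7, integral_sub i2 i9, integral_sub iF2 iC2,
      integral_const_mul, integral_const_mul]
  have eqB : ∫ ω, (H ω - Y ω) ^ 2 ∂μ
      = ∫ ω, (C ω - Y ω) ^ 2 ∂μ + (∫ ω, (H ω - C ω) ^ 2 ∂μ
          + (2 * ∫ ω, d ω * C ω ∂μ - 2 * ∫ ω, d ω * Y ω ∂μ)) := by
    have hpt : (fun ω => (H ω - Y ω) ^ 2)
        = fun ω => (C ω - Y ω) ^ 2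
            + ((H ω - C ω) ^ 2 + (2 * (d ω * C ω) - 2 * (d ω * Y ω))) := by
      funext ω; simp only [hd_def]; ring
    have i9 : Integrable (fun ω => 2 * (d ω * C ω) - 2 * (d ω * Y ω)) μ :=
      (i4.const_mul 2).sub (i5.const_mul 2)
    have i7 : Integrable
        (fun ω => (H ω - C ω) ^ 2 + (2 * (d ω * C ω) - 2 * (d ω * Y ω))) μ := i2.add i9
    have iC2 : Integrable (fun ω => 2 * (d ω * C ω)) μ := i4.const_mul 2
    have iY2' : Integrable (fun ω => 2 * (d ω * Y ω)) μ := i5.const_mul 2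
    rw [hpt, integral_add i6 i7, integral_add i2 i9, integral_sub iC2 iY2',
      integral_const_mul, integral_const_mul]
  have hIDnn : (0:ℝ) ≤ ∫ ω, (H ω - C ω) ^ 2 ∂μ :=
    integral_nonneg fun ω => sq_nonneg _
  have key : ((1 / w) * ∫ ω, (F ω - H ω) ^ 2 ∂μ
        + (1 / (1 - w)) * ∫ ω, (H ω - Y ω) ^ 2 ∂μ)
      - ((1 / w) * ∫ ω, (F ω - C ω) ^ 2 ∂μ
        + (1 / (1 - w)) * ∫ ω, (C ω - Y ω) ^ 2 ∂μ)
      = (1 / (w * (1 - w))) * ∫ ω, (H ω - C ω) ^ 2 ∂μ := by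
    rw [eqA, eqB, hdF, hdY, hdC]
    field_simp
    ring
  refine ⟨key, ?_⟩
  have hpos : (0:ℝ) ≤ (1 / (w * (1 - w))) * ∫ ω, (H ω - C ω) ^ 2 ∂μ := by
    apply mul_nonneg _ hIDnn
    positivity
  linarith [key, hpos]
end

section
/- Let (X, U, Y) be random variables with Y square-integrable, suppose the conditional mean independence condition E[Y | U] = E[Y | U, X] almost surely holds, let f : 𝒳 → ℝ with f(X) square-integrable, and let w ∈ (0, 1). Then the minimum over all square-integrable h : 𝒰 → ℝ of J_w(f, h) equals MSE(f) + ((1−w)/w)·E[(f(X) − E[f(X) | U])²] + (w/(1−w))·E[(Y − E[Y | U])²], where MSE(f) := E[(f(X) − Y)²]. -/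
open MeasureTheory ProbabilityTheory

lemma integrable_mul_of_mem2 {Ω : Type*} [MeasurableSpace Ω] {μ : Measure Ω} {g Z : Ω → ℝ}
    (hg : MemLp g 2 μ) (hZ : MemLp Z 2 μ) : Integrable (fun ω => g ω * Z ω) μ := by
  have hb : Integrable (fun ω => (g ω ^ 2 + Z ω ^ 2) / 2) μ :=
    (hg.integrable_sq.add hZ.integrable_sq).div_const 2
  refine hb.mono' (hg.aestronglyMeasurable.mul hZ.aestronglyMeasurable) ?_
  filter_upwards with ω
  rw [Real.norm_eq_abs, abs_mul]
  nlinarith [sq_nonneg (|g ω| - |Z ω|), sq_abs (g ω), sq_abs (Z ω), abs_nonneg (g ω),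
    abs_nonneg (Z ω)]

lemma memLp_two_condexp {Ω : Type*} {m m0 : MeasurableSpace Ω} (hm : m ≤ m0)
    (μ : Measure Ω) [IsFiniteMeasure μ] {g : Ω → ℝ} (hg : MemLp g 2 μ) :
    MemLp (μ[g|m]) 2 μ := by
  have heq : ((condExpL2 ℝ ℝ hm (hg.toLp g) : Ω →₂[μ] ℝ) : Ω → ℝ) =ᵐ[μ] μ[g|m] := by
    refine ae_eq_condExp_of_forall_setIntegral_eq hm (hg.integrable one_le_two)
      (fun s _ _ => ((Lp.memLp _).integrable one_le_two).integrableOn)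
      (fun s hs hμs => ?_) (aestronglyMeasurable_condExpL2 hm _)
    rw [integral_condExpL2_eq hm (hg.toLp g) hs hμs.ne]
    exact setIntegral_congr_ae (hm s hs) (hg.coeFn_toLp.mono fun ω hω _ => hω)
  exact (Lp.memLp _).ae_eq heq

lemma integral_mul_condexp_zero {Ω : Type*} {m m0 : MeasurableSpace Ω} (hm : m ≤ m0)
    {μ : Measure Ω} [IsFiniteMeasure μ] {g Z : Ω → ℝ}
    (hgm : StronglyMeasurable[m] g) (hg2 : MemLp g 2 μ) (hZ2 : MemLp Z 2 μ)
    (hZ0 : μ[Z|m] =ᵐ[μ] 0) : ∫ ω, g ω * Z ω ∂μ = 0 := by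
  have hint : Integrable (fun ω => g ω * Z ω) μ := integrable_mul_of_mem2 hg2 hZ2
  have hZint : Integrable Z μ := hZ2.integrable one_le_two
  have hpull : μ[fun ω => g ω * Z ω|m] =ᵐ[μ] fun ω => g ω * (μ[Z|m]) ω :=
    condExp_mul_of_stronglyMeasurable_left hgm hint hZint
  rw [← integral_condExp (f := fun ω => g ω * Z ω) hm]
  refine integral_eq_zero_of_ae ?_
  filter_upwards [hpull, hZ0] with ω h1 h2
  rw [h1]
  simp only [Pi.zero_apply] at h2
  rw [h2, mul_zero]
  rfl

lemma integral_expand_sq {Ω : Type*} [MeasurableSpace Ω] (μ : Measure Ω)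
    (a b : ℝ) {p q r : Ω → ℝ} (hp : MemLp p 2 μ) (hq : MemLp q 2 μ) (hr : MemLp r 2 μ) :
    ∫ ω, (p ω + a * q ω + b * r ω) ^ 2 ∂μ
      = ∫ ω, p ω ^ 2 ∂μ + a ^ 2 * ∫ ω, q ω ^ 2 ∂μ + b ^ 2 * ∫ ω, r ω ^ 2 ∂μ
        + 2 * a * ∫ ω, p ω * q ω ∂μ + 2 * b * ∫ ω, p ω * r ω ∂μ
        + 2 * (a * b) * ∫ ω, q ω * r ω ∂μ := by
  have T1 : Integrable (fun ω => p ω ^ 2) μ := hp.integrable_sq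
  have T2 : Integrable (fun ω => a ^ 2 * q ω ^ 2) μ := hq.integrable_sq.const_mul _
  have T3 : Integrable (fun ω => b ^ 2 * r ω ^ 2) μ := hr.integrable_sq.const_mul _
  have T4 : Integrable (fun ω => 2 * a * (p ω * q ω)) μ :=
    (integrable_mul_of_mem2 hp hq).const_mul _
  have T5 : Integrable (fun ω => 2 * b * (p ω * r ω)) μ :=
    (integrable_mul_of_mem2 hp hr).const_mul _
  have T6 : Integrable (fun ω => 2 * (a * b) * (q ω * r ω)) μ :=
    (integrable_mul_of_mem2 hq hr).const_mul _
  have hptw : ∀ ω, (p ω + a * q ω + b * r ω) ^ 2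
      = p ω ^ 2 + a ^ 2 * q ω ^ 2 + b ^ 2 * r ω ^ 2 + 2 * a * (p ω * q ω)
        + 2 * b * (p ω * r ω) + 2 * (a * b) * (q ω * r ω) := fun ω => by ring
  have T12 : Integrable (fun ω => p ω ^ 2 + a ^ 2 * q ω ^ 2) μ := T1.add T2
  have T13 : Integrable (fun ω => p ω ^ 2 + a ^ 2 * q ω ^ 2 + b ^ 2 * r ω ^ 2) μ := T12.add T3
  have T14 : Integrable (fun ω => p ω ^ 2 + a ^ 2 * q ω ^ 2 + b ^ 2 * r ω ^ 2
      + 2 * a * (p ω * q ω)) μ := T13.add T4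
  have T15 : Integrable (fun ω => p ω ^ 2 + a ^ 2 * q ω ^ 2 + b ^ 2 * r ω ^ 2
      + 2 * a * (p ω * q ω) + 2 * b * (p ω * r ω)) μ := T14.add T5
  rw [integral_congr_ae (Filter.Eventually.of_forall hptw)]
  rw [integral_add T15 T6, integral_add T14 T5, integral_add T13 T4, integral_add T12 T3,
    integral_add T1 T2, integral_const_mul, integral_const_mul, integral_const_mul,
    integral_const_mul, integral_const_mul]

lemma integral_mul_comm' {Ω : Type*} [MeasurableSpace Ω] (μ : Measure Ω) (p q : Ω → ℝ) :
    ∫ ω, p ω * q ω ∂μ = ∫ ω, q ω * p ω ∂μ :=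
  integral_congr_ae (Filter.Eventually.of_forall fun ω => mul_comm _ _)

/-- Joint-RR as a regularized method, Section 5.3.
Under conditional mean independence, the minimum over all square-integrable `h` of
`J_w(f, h)` equals
`MSE(f) + ((1−w)/w)·E[(f(X) − E[f(X)|U])²] + (w/(1−w))·E[(Y − E[Y|U])²]`. -/
theorem Jw_inner_min_eq_mse_add_shrinkage
    {Ω : Type*} [MeasurableSpace Ω] (μ : Measure Ω) [IsProbabilityMeasure μ]
    {dX dU : ℕ}
    (X : Ω → (Fin dX → ℝ)) (U : Ω → (Fin dU → ℝ)) (Y : Ω → ℝ)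
    (hX : Measurable X) (hU : Measurable U) (hY : Measurable Y)
    (hY2 : MemLp Y 2 μ)
    (hCMI : μ[Y | MeasurableSpace.comap U inferInstance]
      =ᵐ[μ] μ[Y | MeasurableSpace.comap (fun ω => (U ω, X ω)) inferInstance])
    (f : (Fin dX → ℝ) → ℝ) (hf : Measurable f)
    (hfX : MemLp (fun ω => f (X ω)) 2 μ)
    (w : ℝ) (hw : w ∈ Set.Ioo (0 : ℝ) 1) :
    IsLeast
      {r : ℝ | ∃ h : (Fin dU → ℝ) → ℝ, Measurable h ∧ MemLp (fun ω => h (U ω)) 2 μ ∧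
        r = (1 / w) * ∫ ω, (f (X ω) - h (U ω)) ^ 2 ∂μ
          + (1 / (1 - w)) * ∫ ω, (h (U ω) - Y ω) ^ 2 ∂μ}
      ((∫ ω, (f (X ω) - Y ω) ^ 2 ∂μ)
        + ((1 - w) / w) * ∫ ω,
            (f (X ω) - (μ[fun ω' => f (X ω') | MeasurableSpace.comap U inferInstance]) ω) ^ 2 ∂μ
        + (w / (1 - w)) * ∫ ω,
            (Y ω - (μ[Y | MeasurableSpace.comap U inferInstance]) ω) ^ 2 ∂μ) := by
  obtain ⟨hw0, hw1⟩ := hw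
  have hw0' : w ≠ 0 := ne_of_gt hw0
  have hwlt : (0:ℝ) < 1 - w := by linarith
  have hw1' : (1:ℝ) - w ≠ 0 := ne_of_gt hwlt
  have hm : MeasurableSpace.comap U inferInstance ≤ ‹MeasurableSpace Ω› := hU.comap_le
  have hm2 : MeasurableSpace.comap (fun ω => (U ω, X ω)) inferInstance
      ≤ ‹MeasurableSpace Ω› := (hU.prodMk hX).comap_le
  have hm12 : MeasurableSpace.comap U inferInstance
      ≤ MeasurableSpace.comap (fun ω => (U ω, X ω)) inferInstance :=
    calc MeasurableSpace.comap U inferInstance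
        = (MeasurableSpace.comap Prod.fst inferInstance).comap (fun ω => (U ω, X ω)) := by
          rw [MeasurableSpace.comap_comp]; rfl
      _ ≤ _ := MeasurableSpace.comap_mono measurable_fst.comap_le
  set A : Ω → ℝ := μ[fun ω' => f (X ω') | (MeasurableSpace.comap U inferInstance)] with hA_def
  set B : Ω → ℝ := μ[Y | (MeasurableSpace.comap U inferInstance)] with hB_def
  have hfXint : Integrable (fun ω => f (X ω)) μ := hfX.integrable one_le_two
  have hYint : Integrable Y μ := hY2.integrable one_le_two
  have hA2 : MemLp A 2 μ := memLp_two_condexp hm μ hfX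
  have hB2 : MemLp B 2 μ := memLp_two_condexp hm μ hY2
  have hAm : StronglyMeasurable[(MeasurableSpace.comap U inferInstance)] A := stronglyMeasurable_condExp
  have hBm : StronglyMeasurable[(MeasurableSpace.comap U inferInstance)] B := stronglyMeasurable_condExp
  have hε2 : MemLp (fun ω => f (X ω) - A ω) 2 μ := hfX.sub hA2
  have hη2 : MemLp (fun ω => Y ω - B ω) 2 μ := hY2.sub hB2
  have hC2 : MemLp (fun ω => A ω - B ω) 2 μ := hA2.sub hB2
  have hCm : StronglyMeasurable[(MeasurableSpace.comap U inferInstance)] (fun ω => A ω - B ω) := hAm.sub hBm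
  have hεcond : μ[(fun ω => f (X ω) - A ω) | (MeasurableSpace.comap U inferInstance)] =ᵐ[μ] 0 := by
    have h1 : μ[(fun ω' => f (X ω')) - A | (MeasurableSpace.comap U inferInstance)]
        =ᵐ[μ] μ[(fun ω' => f (X ω'))|(MeasurableSpace.comap U inferInstance)] - μ[A|(MeasurableSpace.comap U inferInstance)] := condExp_sub hfXint integrable_condExp _
    rw [condExp_of_stronglyMeasurable hm hAm integrable_condExp, ← hA_def] at h1
    exact h1.trans (by rw [sub_self])
  have hηcond : μ[(fun ω => Y ω - B ω) | (MeasurableSpace.comap U inferInstance)] =ᵐ[μ] 0 := by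
    have h1 : μ[Y - B | (MeasurableSpace.comap U inferInstance)] =ᵐ[μ] μ[Y|(MeasurableSpace.comap U inferInstance)] - μ[B|(MeasurableSpace.comap U inferInstance)] := condExp_sub hYint integrable_condExp _
    rw [condExp_of_stronglyMeasurable hm hBm integrable_condExp, ← hB_def] at h1
    exact h1.trans (by rw [sub_self])
  have hηcond2 : μ[(fun ω => Y ω - B ω) | (MeasurableSpace.comap (fun ω => (U ω, X ω)) inferInstance)] =ᵐ[μ] 0 := by
    have h1 : μ[Y - B | (MeasurableSpace.comap (fun ω => (U ω, X ω)) inferInstance)] =ᵐ[μ] μ[Y|(MeasurableSpace.comap (fun ω => (U ω, X ω)) inferInstance)] - μ[B|(MeasurableSpace.comap (fun ω => (U ω, X ω)) inferInstance)] := condExp_sub hYint integrable_condExp _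
    rw [condExp_of_stronglyMeasurable hm2 (hBm.mono hm12) integrable_condExp] at h1
    refine h1.trans ?_
    filter_upwards [hCMI] with ω hω
    simp only [Pi.sub_apply, Pi.zero_apply]
    rw [← hω]
    simp [hB_def]
  have hUcomap : Measurable[(MeasurableSpace.comap U inferInstance)] U := Measurable.of_comap_le le_rfl
  have hpairm : Measurable[(MeasurableSpace.comap (fun ω => (U ω, X ω)) inferInstance)] (fun ω => (U ω, X ω)) := Measurable.of_comap_le le_rfl
  have hXm2 : Measurable[(MeasurableSpace.comap (fun ω => (U ω, X ω)) inferInstance)] X := (measurable_snd.comp hpairm : _)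
  have hεmUX : StronglyMeasurable[(MeasurableSpace.comap (fun ω => (U ω, X ω)) inferInstance)] (fun ω => f (X ω) - A ω) :=
    (((hf.comp hXm2) : Measurable[(MeasurableSpace.comap (fun ω => (U ω, X ω)) inferInstance)] fun ω => f (X ω)).stronglyMeasurable).sub
      (hAm.mono hm12)
  -- zero cross terms
  have zεC : ∫ ω, (f (X ω) - A ω) * (A ω - B ω) ∂μ = 0 :=
    (integral_mul_comm' μ _ _).trans (integral_mul_condexp_zero hm hCm hC2 hε2 hεcond)
  have zηC : ∫ ω, (Y ω - B ω) * (A ω - B ω) ∂μ = 0 :=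
    (integral_mul_comm' μ _ _).trans (integral_mul_condexp_zero hm hCm hC2 hη2 hηcond)
  have zεη : ∫ ω, (f (X ω) - A ω) * (Y ω - B ω) ∂μ = 0 :=
    integral_mul_condexp_zero hm2 hεmUX hε2 hη2 hηcond2
  have zCη : ∫ ω, (A ω - B ω) * (Y ω - B ω) ∂μ = 0 :=
    integral_mul_condexp_zero hm hCm hC2 hη2 hηcond
  -- the key identity
  have key : ∀ h : (Fin dU → ℝ) → ℝ, Measurable h → MemLp (fun ω => h (U ω)) 2 μ →
      (1 / w) * ∫ ω, (f (X ω) - h (U ω)) ^ 2 ∂μ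
        + (1 / (1 - w)) * ∫ ω, (h (U ω) - Y ω) ^ 2 ∂μ
      = ((∫ ω, (f (X ω) - Y ω) ^ 2 ∂μ)
          + ((1 - w) / w) * ∫ ω, (f (X ω) - A ω) ^ 2 ∂μ
          + (w / (1 - w)) * ∫ ω, (Y ω - B ω) ^ 2 ∂μ)
        + (1 / (w * (1 - w)))
            * ∫ ω, (h (U ω) - ((1 - w) * A ω + w * B ω)) ^ 2 ∂μ := by
    intro h hh hh2
    have hG2 : MemLp (fun ω => (1 - w) * A ω + w * B ω) 2 μ :=
      (hA2.const_mul (1 - w)).add (hB2.const_mul w)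
    have hD2 : MemLp (fun ω => h (U ω) - ((1 - w) * A ω + w * B ω)) 2 μ := hh2.sub hG2
    have hDm : StronglyMeasurable[(MeasurableSpace.comap U inferInstance)] (fun ω => h (U ω) - ((1 - w) * A ω + w * B ω)) :=
      (((hh.comp hUcomap) : Measurable[(MeasurableSpace.comap U inferInstance)] fun ω => h (U ω)).stronglyMeasurable).sub
        ((stronglyMeasurable_const.mul hAm).add (stronglyMeasurable_const.mul hBm))
    have zεD : ∫ ω, (f (X ω) - A ω) * (h (U ω) - ((1 - w) * A ω + w * B ω)) ∂μ = 0 :=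
      (integral_mul_comm' μ _ _).trans (integral_mul_condexp_zero hm hDm hD2 hε2 hεcond)
    have zηD : ∫ ω, (Y ω - B ω) * (h (U ω) - ((1 - w) * A ω + w * B ω)) ∂μ = 0 :=
      (integral_mul_comm' μ _ _).trans (integral_mul_condexp_zero hm hDm hD2 hη2 hηcond)
    have B1 : ∫ ω, (f (X ω) - h (U ω)) ^ 2 ∂μ
        = ∫ ω, ((f (X ω) - A ω) + w * (A ω - B ω)
            + (-1) * (h (U ω) - ((1 - w) * A ω + w * B ω))) ^ 2 ∂μ :=
      integral_congr_ae (Filter.Eventually.of_forall fun ω => by ring)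
    have B2 : ∫ ω, (h (U ω) - Y ω) ^ 2 ∂μ
        = ∫ ω, ((Y ω - B ω) + (-(1 - w)) * (A ω - B ω)
            + (-1) * (h (U ω) - ((1 - w) * A ω + w * B ω))) ^ 2 ∂μ :=
      integral_congr_ae (Filter.Eventually.of_forall fun ω => by ring)
    have B3 : ∫ ω, (f (X ω) - Y ω) ^ 2 ∂μ
        = ∫ ω, ((f (X ω) - A ω) + 1 * (A ω - B ω) + (-1) * (Y ω - B ω)) ^ 2 ∂μ :=
      integral_congr_ae (Filter.Eventually.of_forall fun ω => by ring)
    have E1 : ∫ ω, ((f (X ω) - A ω) + w * (A ω - B ω)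
            + (-1) * (h (U ω) - ((1 - w) * A ω + w * B ω))) ^ 2 ∂μ
        = ∫ ω, (f (X ω) - A ω) ^ 2 ∂μ + w ^ 2 * ∫ ω, (A ω - B ω) ^ 2 ∂μ
          + (-1 : ℝ) ^ 2 * ∫ ω, (h (U ω) - ((1 - w) * A ω + w * B ω)) ^ 2 ∂μ
          + 2 * w * ∫ ω, (f (X ω) - A ω) * (A ω - B ω) ∂μ
          + 2 * (-1) * ∫ ω, (f (X ω) - A ω) * (h (U ω) - ((1 - w) * A ω + w * B ω)) ∂μ
          + 2 * (w * (-1)) * ∫ ω, (A ω - B ω) * (h (U ω) - ((1 - w) * A ω + w * B ω)) ∂μ :=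
      integral_expand_sq μ w (-1) hε2 hC2 hD2
    have E2 : ∫ ω, ((Y ω - B ω) + (-(1 - w)) * (A ω - B ω)
            + (-1) * (h (U ω) - ((1 - w) * A ω + w * B ω))) ^ 2 ∂μ
        = ∫ ω, (Y ω - B ω) ^ 2 ∂μ + (-(1 - w)) ^ 2 * ∫ ω, (A ω - B ω) ^ 2 ∂μ
          + (-1 : ℝ) ^ 2 * ∫ ω, (h (U ω) - ((1 - w) * A ω + w * B ω)) ^ 2 ∂μ
          + 2 * (-(1 - w)) * ∫ ω, (Y ω - B ω) * (A ω - B ω) ∂μ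
          + 2 * (-1) * ∫ ω, (Y ω - B ω) * (h (U ω) - ((1 - w) * A ω + w * B ω)) ∂μ
          + 2 * (-(1 - w) * -1) * ∫ ω, (A ω - B ω) * (h (U ω) - ((1 - w) * A ω + w * B ω)) ∂μ :=
      integral_expand_sq μ (-(1 - w)) (-1) hη2 hC2 hD2
    have E3 : ∫ ω, ((f (X ω) - A ω) + 1 * (A ω - B ω) + (-1) * (Y ω - B ω)) ^ 2 ∂μ
        = ∫ ω, (f (X ω) - A ω) ^ 2 ∂μ + (1 : ℝ) ^ 2 * ∫ ω, (A ω - B ω) ^ 2 ∂μ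
          + (-1 : ℝ) ^ 2 * ∫ ω, (Y ω - B ω) ^ 2 ∂μ
          + 2 * 1 * ∫ ω, (f (X ω) - A ω) * (A ω - B ω) ∂μ
          + 2 * (-1) * ∫ ω, (f (X ω) - A ω) * (Y ω - B ω) ∂μ
          + 2 * (1 * -1) * ∫ ω, (A ω - B ω) * (Y ω - B ω) ∂μ :=
      integral_expand_sq μ 1 (-1) hε2 hC2 hη2
    rw [B1, B2, B3, E1, E2, E3, zεC, zεD, zηC, zηD, zεη, zCη]
    field_simp
    ring
  constructor
  · -- membership
    set gA : (Fin dU → ℝ) → ℝ :=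
      fun u => ∫ y, y ∂(condDistrib (fun ω' => f (X ω')) U μ u) with hgA_def
    set gB : (Fin dU → ℝ) → ℝ := fun u => ∫ y, y ∂(condDistrib Y U μ u) with hgB_def
    have hgA : Measurable gA :=
      (measurable_snd.stronglyMeasurable.integral_kernel_prod_right'
        (κ := condDistrib (fun ω' => f (X ω')) U μ)).measurable
    have hgB : Measurable gB :=
      (measurable_snd.stronglyMeasurable.integral_kernel_prod_right'
        (κ := condDistrib Y U μ)).measurable
    have hAeq : A =ᵐ[μ] fun ω => gA (U ω) := by
      have := condExp_ae_eq_integral_condDistrib' (μ := μ) hU hfXint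
      rw [← hA_def] at this
      exact this
    have hBeq : B =ᵐ[μ] fun ω => gB (U ω) := by
      have := condExp_ae_eq_integral_condDistrib' (μ := μ) hU hYint
      rw [← hB_def] at this
      exact this
    have hcomb : (fun ω => (1 - w) * A ω + w * B ω)
        =ᵐ[μ] fun ω => (1 - w) * gA (U ω) + w * gB (U ω) := by
      filter_upwards [hAeq, hBeq] with ω h1 h2
      rw [h1, h2]
    have hmem2 : MemLp (fun ω => (1 - w) * gA (U ω) + w * gB (U ω)) 2 μ :=
      ((hA2.const_mul (1 - w)).add (hB2.const_mul w)).ae_eq hcomb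
    refine ⟨fun u => (1 - w) * gA u + w * gB u,
      (hgA.const_mul _).add (hgB.const_mul _), hmem2, ?_⟩
    rw [key (fun u => (1 - w) * gA u + w * gB u) ((hgA.const_mul _).add (hgB.const_mul _)) hmem2]
    have hD0 : ∫ ω, (((1 - w) * gA (U ω) + w * gB (U ω))
        - ((1 - w) * A ω + w * B ω)) ^ 2 ∂μ = 0 := by
      have h0 : (fun ω => (((1 - w) * gA (U ω) + w * gB (U ω))
          - ((1 - w) * A ω + w * B ω)) ^ 2) =ᵐ[μ] fun _ => (0:ℝ) := by
        filter_upwards [hcomb] with ω hω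
        simp [← hω]
      rw [integral_congr_ae h0, integral_zero]
    rw [hD0, mul_zero, add_zero]
  · -- lower bound
    rintro r ⟨h, hh, hh2, rfl⟩
    rw [key h hh hh2]
    have h4 : 0 ≤ ∫ ω, (h (U ω) - ((1 - w) * A ω + w * B ω)) ^ 2 ∂μ :=
      integral_nonneg fun ω => sq_nonneg _
    have h5 : (0:ℝ) ≤ 1 / (w * (1 - w)) := by positivity
    nlinarith [mul_nonneg h5 h4]
end

section
/- Let (X, U, Y) be random variables with Y square-integrable and suppose the conditional mean independence condition E[Y | U] = E[Y | U, X] almost surely holds. Then for every measurable f : 𝒳 → ℝ with f(X) square-integrable, E[(Y − f(X))²] = E[(E[Y | U] − f(X))²] + E[(Y − E[Y | U])²]. -/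
open MeasureTheory

lemma myIntegrableMul {α : Type*} [MeasurableSpace α] {μ : Measure α} {f g : α → ℝ}
    (hf : MemLp f 2 μ) (hg : MemLp g 2 μ) : Integrable (fun ω => f ω * g ω) μ := by
  refine Integrable.mono' (((hf.integrable_sq.add hg.integrable_sq)).div_const 2)
    (hf.aestronglyMeasurable.mul hg.aestronglyMeasurable) (Filter.Eventually.of_forall fun x => ?_)
  have hb : ‖f x * g x‖ ≤ (f x ^ 2 + g x ^ 2) / 2 := by
    rw [Real.norm_eq_abs, abs_mul]
    nlinarith [sq_nonneg (|f x| - |g x|), sq_abs (f x), sq_abs (g x), abs_nonneg (f x),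
      abs_nonneg (g x)]
  simpa using hb

lemma myMemLpCondexp {α : Type*} {m : MeasurableSpace α} [m0 : MeasurableSpace α] (hm : m ≤ m0)
    {μ : Measure α} [IsFiniteMeasure μ] {Y : α → ℝ} (hY2 : MemLp Y 2 μ) :
    MemLp (μ[Y|m]) 2 μ := by
  have hint : Integrable Y μ := hY2.integrable one_le_two
  set YL : (α →₂[μ] ℝ) := hY2.toLp Y with hYL
  set CE : Lp ℝ 2 μ := ↑(condExpL2 ℝ ℝ hm YL) with hCE
  have hae : (CE : α → ℝ) =ᵐ[μ] μ[Y|m] := by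
    refine ae_eq_condExp_of_forall_setIntegral_eq hm hint
      (fun s _ hμs => integrableOn_Lp_of_measure_ne_top CE fact_one_le_two_ennreal.elim hμs.ne)
      (fun s hs hμs => ?_) (by rw [hCE]; exact aestronglyMeasurable_condExpL2 hm YL)
    rw [hCE, integral_condExpL2_eq hm YL hs hμs.ne]
    exact setIntegral_congr_ae (hm s hs) ((hY2.coeFn_toLp).mono fun x hx _ => hx)
  exact (Lp.memLp CE).ae_eq hae

lemma myMSEAux {Ω : Type*} {m mU : MeasurableSpace Ω} [m0 : MeasurableSpace Ω]
    (μ : Measure Ω) [IsProbabilityMeasure μ]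
    (hmU_le : mU ≤ m0) (hm_le : m ≤ m0) (hmUm : mU ≤ m) {Y F : Ω → ℝ}
    (hY2 : MemLp Y 2 μ) (hF2 : MemLp F 2 μ) (hFm : StronglyMeasurable[m] F)
    (hCMI : μ[Y|mU] =ᵐ[μ] μ[Y|m]) :
    ∫ ω, (Y ω - F ω) ^ 2 ∂μ
      = (∫ ω, ((μ[Y|mU]) ω - F ω) ^ 2 ∂μ) + ∫ ω, (Y ω - (μ[Y|mU]) ω) ^ 2 ∂μ := by
  have hYint : Integrable Y μ := hY2.integrable one_le_two
  set Z : Ω → ℝ := μ[Y|mU] with hZdef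
  have hZ2 : MemLp Z 2 μ := myMemLpCondexp hmU_le hY2
  have hZm : StronglyMeasurable[m] Z := stronglyMeasurable_condExp.mono hmUm
  set g : Ω → ℝ := fun ω => Z ω - F ω with hgdef
  have hgm : StronglyMeasurable[m] g := hZm.sub hFm
  have hg2 : MemLp g 2 μ := hZ2.sub hF2
  have hgY : Integrable (fun ω => g ω * Y ω) μ := myIntegrableMul hg2 hY2
  have hgZ : Integrable (fun ω => g ω * Z ω) μ := myIntegrableMul hg2 hZ2
  have hpull : μ[(fun ω => g ω * Y ω)|m] =ᵐ[μ] fun ω => g ω * (μ[Y|m]) ω :=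
    condExp_mul_of_stronglyMeasurable_left hgm hgY hYint
  have hcross : ∫ ω, g ω * (Y ω - Z ω) ∂μ = 0 := by
    have h1 : ∫ ω, g ω * Y ω ∂μ = ∫ ω, g ω * (μ[Y|m]) ω ∂μ := by
      rw [show (∫ ω, g ω * Y ω ∂μ) = ∫ ω, (μ[(fun ω => g ω * Y ω)|m]) ω ∂μ from
        (integral_condExp hm_le).symm]
      exact integral_congr_ae hpull
    have h2 : ∫ ω, g ω * (μ[Y|m]) ω ∂μ = ∫ ω, g ω * Z ω ∂μ := by
      refine integral_congr_ae ?_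
      filter_upwards [hCMI] with ω hω
      exact congrArg (fun t => g ω * t) hω.symm
    have h3 : ∫ ω, g ω * (Y ω - Z ω) ∂μ
        = ∫ ω, g ω * Y ω ∂μ - ∫ ω, g ω * Z ω ∂μ := by
      rw [← integral_sub hgY hgZ]
      congr 1; ext ω; ring
    rw [h3, h1, h2, sub_self]
  have hYZ2 : MemLp (fun ω => Y ω - Z ω) 2 μ := hY2.sub hZ2
  have hInt1 : Integrable (fun ω => g ω ^ 2) μ := hg2.integrable_sq
  have hInt2 : Integrable (fun ω => (Y ω - Z ω) ^ 2) μ := hYZ2.integrable_sq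
  have hIntCross : Integrable (fun ω => g ω * (Y ω - Z ω)) μ := myIntegrableMul hg2 hYZ2
  have hptw : ∀ ω, (Y ω - F ω) ^ 2
      = g ω ^ 2 + ((Y ω - Z ω) ^ 2 + 2 * (g ω * (Y ω - Z ω))) := by
    intro ω; simp only [hgdef]; ring
  calc ∫ ω, (Y ω - F ω) ^ 2 ∂μ
      = ∫ ω, (g ω ^ 2 + ((Y ω - Z ω) ^ 2 + 2 * (g ω * (Y ω - Z ω)))) ∂μ :=
        integral_congr_ae (Filter.Eventually.of_forall hptw)
    _ = (∫ ω, g ω ^ 2 ∂μ) + ((∫ ω, (Y ω - Z ω) ^ 2 ∂μ) + 2 * ∫ ω, g ω * (Y ω - Z ω) ∂μ) := by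
        have hInt4 : Integrable (fun ω => (Y ω - Z ω) ^ 2 + 2 * (g ω * (Y ω - Z ω))) μ :=
          hInt2.add (hIntCross.const_mul 2)
        rw [integral_add hInt1 hInt4, integral_add hInt2 (hIntCross.const_mul 2),
          integral_const_mul]
    _ = (∫ ω, (Z ω - F ω) ^ 2 ∂μ) + ∫ ω, (Y ω - Z ω) ^ 2 ∂μ := by
        rw [hcross]; ring

/-- MSE decomposition under conditional mean independence, Section 5.3.
If `E[Y | U] = E[Y | U, X]` a.s., then for every measurable square-integrable `f`,
`E[(Y − f(X))²] = E[(E[Y|U] − f(X))²] + E[(Y − E[Y|U])²]`. -/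
theorem mse_decomposition_of_cond_mean_indep
    {Ω : Type*} [MeasurableSpace Ω] (μ : Measure Ω) [IsProbabilityMeasure μ]
    {dX dU : ℕ}
    (X : Ω → (Fin dX → ℝ)) (U : Ω → (Fin dU → ℝ)) (Y : Ω → ℝ)
    (hX : Measurable X) (hU : Measurable U) (hY : Measurable Y)
    (hY2 : MemLp Y 2 μ)
    (hCMI : μ[Y | MeasurableSpace.comap U inferInstance]
      =ᵐ[μ] μ[Y | MeasurableSpace.comap (fun ω => (U ω, X ω)) inferInstance]) :
    ∀ f : (Fin dX → ℝ) → ℝ, Measurable f → MemLp (fun ω => f (X ω)) 2 μ →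
      ∫ ω, (Y ω - f (X ω)) ^ 2 ∂μ
        = (∫ ω, ((μ[Y | MeasurableSpace.comap U inferInstance]) ω - f (X ω)) ^ 2 ∂μ)
          + ∫ ω, (Y ω - (μ[Y | MeasurableSpace.comap U inferInstance]) ω) ^ 2 ∂μ := by
  intro f hf hf2
  have hUX : Measurable fun ω => (U ω, X ω) := hU.prodMk hX
  have hmUm : MeasurableSpace.comap U inferInstance
      ≤ MeasurableSpace.comap (fun ω => (U ω, X ω)) inferInstance := by
    rw [show U = (fun p : (Fin dU → ℝ) × (Fin dX → ℝ) => p.1) ∘ (fun ω => (U ω, X ω)) from rfl,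
      ← MeasurableSpace.comap_comp]
    exact MeasurableSpace.comap_mono measurable_fst.comap_le
  have hfXm : StronglyMeasurable[MeasurableSpace.comap (fun ω => (U ω, X ω)) inferInstance]
      fun ω => f (X ω) := by
    refine Measurable.stronglyMeasurable ?_
    have hpair : Measurable[MeasurableSpace.comap (fun ω => (U ω, X ω)) inferInstance]
        fun ω => (U ω, X ω) := fun s hs => ⟨s, hs, rfl⟩
    exact (hf.comp measurable_snd).comp hpair
  exact myMSEAux μ hU.comap_le hUX.comap_le hmUm hY2 hf2 hfXm hCMI
end

section
/- Let n, n', b_F, b_H be positive natural numbers, x₁,…,xₙ ∈ ℝ^{d_X}, u₁,…,uₙ ∈ ℝ^{d_U}, u'₁,…,u'_{n'} ∈ ℝ^{d_U}, y'₁,…,y'_{n'} ∈ ℝ, φ : ℝ^{d_X} → ℝ^{b_F} and ψ : ℝ^{d_U} → ℝ^{b_H} feature maps, w ∈ (0, 1), and λ > 0. Define Ĵ_w(α, β) := (1/(wn))·Σᵢ₌₁ⁿ (αᵀφ(xᵢ) − βᵀψ(uᵢ))² + (1/((1−w)n'))·Σᵢ₌₁^{n'} (βᵀψ(u'ᵢ)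 − y'ᵢ)², and the matrices M₁ := (1/(nw))·Σᵢ φ(xᵢ)φ(xᵢ)ᵀ + λI_{b_F}, M₂ := (1/(nw))·Σᵢ φ(xᵢ)ψ(uᵢ)ᵀ, M₃ := (1/(nw))·Σᵢ ψ(uᵢ)ψ(uᵢ)ᵀ + (1/(n'(1−w)))·Σᵢ ψ(u'ᵢ)ψ(u'ᵢ)ᵀ + λI_{b_H}, and b₁ := (1/(n'(1−w)))·Σᵢ y'ᵢ ψ(u'ᵢ). Then M₁ and the Schur complement M₃ − M₂ᵀM₁⁻¹M₂ are invertible, and the pair β̂ := (M₃ − M₂ᵀM₁⁻¹M₂)⁻¹ b₁, α̂ := M₁⁻¹ M₂ β̂ is the unique minimizer over (α, β) ∈ ℝ^{b_F} × ℝ^{b_H} of Ĵ_w(α, β) + λ(αᵀα + βᵀβ). -/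
open Matrix
open scoped BigOperators

private lemma vecMulVec_mulVec' {k l : ℕ} (v : Fin k → ℝ) (w : Fin l → ℝ) (z : Fin l → ℝ) :
    Matrix.vecMulVec v w *ᵥ z = (w ⬝ᵥ z) • v := by
  ext i
  simp only [Matrix.mulVec, dotProduct, Matrix.vecMulVec_apply, Pi.smul_apply,
    smul_eq_mul, Finset.sum_mul]
  exact Finset.sum_congr rfl fun t _ => by ring

private lemma sum_mulVec' {k l m : ℕ} (A : Fin m → Matrix (Fin k) (Fin l) ℝ) (z : Fin l → ℝ) :
    (∑ i, A i) *ᵥ z = ∑ i, A i *ᵥ z := by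
  ext j
  simp only [Matrix.mulVec, dotProduct, Matrix.sum_apply, Finset.sum_apply, Finset.sum_mul]
  rw [Finset.sum_comm]

private lemma dotProduct_sum' {k m : ℕ} (q : Fin k → ℝ) (f : Fin m → Fin k → ℝ) :
    q ⬝ᵥ (∑ i, f i) = ∑ i, q ⬝ᵥ f i := by
  simp only [dotProduct, Finset.sum_apply, Finset.mul_sum]
  rw [Finset.sum_comm]

private lemma dot_smul_sum_vmv {k l m : ℕ} (c : ℝ) (f : Fin m → Fin k → ℝ)
    (g : Fin m → Fin l → ℝ) (q : Fin k → ℝ) (r : Fin l → ℝ) :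
    q ⬝ᵥ ((c • ∑ i, Matrix.vecMulVec (f i) (g i)) *ᵥ r) = c * ∑ i, (q ⬝ᵥ f i) * (r ⬝ᵥ g i) := by
  rw [Matrix.smul_mulVec, sum_mulVec', dotProduct_smul, dotProduct_sum',
    smul_eq_mul]
  congr 1
  refine Finset.sum_congr rfl fun i _ => ?_
  rw [vecMulVec_mulVec', dotProduct_smul, smul_eq_mul,
    dotProduct_comm (g i) r]
  ring

private lemma dotProduct_self_nonneg' {k : Type*} [Fintype k] (v : k → ℝ) : 0 ≤ v ⬝ᵥ v :=
  Finset.sum_nonneg fun i _ => mul_self_nonneg _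

private lemma dotProduct_self_pos' {k : Type*} [Fintype k] {v : k → ℝ} (hv : v ≠ 0) : 0 < v ⬝ᵥ v :=
  lt_of_le_of_ne (dotProduct_self_nonneg' v)
    (fun h => hv (dotProduct_self_eq_zero.mp h.symm))

private lemma isUnit_of_posForm {k : Type*} [Fintype k] [DecidableEq k] (M : Matrix k k ℝ)
    (h : ∀ v : k → ℝ, v ≠ 0 → 0 < v ⬝ᵥ (M *ᵥ v)) : IsUnit M := by
  rw [← Matrix.mulVec_injective_iff_isUnit]
  intro v w hvw
  by_contra hne
  have hsub : M *ᵥ (v - w) = 0 := by rw [Matrix.mulVec_sub, hvw, sub_self]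
  have := h (v - w) (sub_ne_zero.mpr hne)
  rw [hsub, dotProduct_zero] at this
  exact lt_irrefl 0 this

private lemma vecMulVec_transpose' {k l : ℕ} (v : Fin k → ℝ) (w : Fin l → ℝ) :
    (Matrix.vecMulVec v w)ᵀ = Matrix.vecMulVec w v := by
  ext i j
  simp [Matrix.vecMulVec_apply, mul_comm]

/-- Theorem 2 of the paper: closed-form solution of ℓ₂-regularized
Joint-RR for linear-in-parameter models.  `M₁` and the Schur complement
`M₃ − M₂ᵀM₁⁻¹M₂` are invertible and `(α̂, β̂)` given by the block-wise inversion
formulas is the unique minimizer of `Ĵ_w(α, β) + λ(αᵀα + βᵀβ)`. -/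
theorem jointRR_linear_closed_form
    {dX dU : ℕ} (n n' bF bH : ℕ) (hn : 0 < n) (hn' : 0 < n') (hbF : 0 < bF) (hbH : 0 < bH)
    (x : Fin n → (Fin dX → ℝ)) (u : Fin n → (Fin dU → ℝ))
    (u' : Fin n' → (Fin dU → ℝ)) (y' : Fin n' → ℝ)
    (φ : (Fin dX → ℝ) → (Fin bF → ℝ)) (ψ : (Fin dU → ℝ) → (Fin bH → ℝ))
    (w : ℝ) (hw : w ∈ Set.Ioo (0 : ℝ) 1) (lam : ℝ) (hlam : 0 < lam) :
    let J : (Fin bF → ℝ) × (Fin bH → ℝ) → ℝ := fun p =>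
      (1 / (w * n)) * ∑ i, (p.1 ⬝ᵥ φ (x i) - p.2 ⬝ᵥ ψ (u i)) ^ 2
        + (1 / ((1 - w) * n')) * ∑ i, (p.2 ⬝ᵥ ψ (u' i) - y' i) ^ 2
        + lam * (p.1 ⬝ᵥ p.1 + p.2 ⬝ᵥ p.2);
    let M₁ : Matrix (Fin bF) (Fin bF) ℝ :=
      (1 / ((n : ℝ) * w)) • ∑ i, vecMulVec (φ (x i)) (φ (x i)) + lam • (1 : Matrix _ _ ℝ);
    let M₂ : Matrix (Fin bF) (Fin bH) ℝ :=
      (1 / ((n : ℝ) * w)) • ∑ i, vecMulVec (φ (x i)) (ψ (u i));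
    let M₃ : Matrix (Fin bH) (Fin bH) ℝ :=
      (1 / ((n : ℝ) * w)) • ∑ i, vecMulVec (ψ (u i)) (ψ (u i))
        + (1 / ((n' : ℝ) * (1 - w))) • ∑ i, vecMulVec (ψ (u' i)) (ψ (u' i))
        + lam • (1 : Matrix _ _ ℝ);
    let b₁ : Fin bH → ℝ := (1 / ((n' : ℝ) * (1 - w))) • ∑ i, y' i • ψ (u' i);
    let S : Matrix (Fin bH) (Fin bH) ℝ := M₃ - M₂ᵀ * M₁⁻¹ * M₂;
    let β : Fin bH → ℝ := S⁻¹ *ᵥ b₁;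
    let α : Fin bF → ℝ := M₁⁻¹ *ᵥ (M₂ *ᵥ β);
    IsUnit M₁ ∧ IsUnit S ∧
      ∀ p : (Fin bF → ℝ) × (Fin bH → ℝ),
        J (α, β) ≤ J p ∧ (J p = J (α, β) → p = (α, β)) := by
  intro J M₁ M₂ M₃ b₁ S β α
  obtain ⟨hw0, hw1⟩ := hw
  have hnpos : (0 : ℝ) < n := by exact_mod_cast hn
  have hn'pos : (0 : ℝ) < n' := by exact_mod_cast hn'
  have h1w : (0 : ℝ) < 1 - w := by linarith
  have hc : (0 : ℝ) < 1 / ((n : ℝ) * w) := by positivity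
  have hc' : (0 : ℝ) < 1 / ((n' : ℝ) * (1 - w)) := by positivity
  -- quadratic form expansions
  have hM1 : ∀ q r : Fin bF → ℝ, q ⬝ᵥ (M₁ *ᵥ r)
      = (1 / ((n : ℝ) * w)) * ∑ i, (q ⬝ᵥ φ (x i)) * (r ⬝ᵥ φ (x i)) + lam * (q ⬝ᵥ r) := by
    intro q r
    simp only [M₁]
    rw [Matrix.add_mulVec, dotProduct_add, dot_smul_sum_vmv,
      Matrix.smul_mulVec, Matrix.one_mulVec, dotProduct_smul, smul_eq_mul]
  have hM2 : ∀ (q : Fin bF → ℝ) (r : Fin bH → ℝ), q ⬝ᵥ (M₂ *ᵥ r)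
      = (1 / ((n : ℝ) * w)) * ∑ i, (q ⬝ᵥ φ (x i)) * (r ⬝ᵥ ψ (u i)) := by
    intro q r
    simp only [M₂]
    rw [dot_smul_sum_vmv]
  have hM2t : ∀ (q : Fin bH → ℝ) (r : Fin bF → ℝ), q ⬝ᵥ (M₂ᵀ *ᵥ r)
      = (1 / ((n : ℝ) * w)) * ∑ i, (q ⬝ᵥ ψ (u i)) * (r ⬝ᵥ φ (x i)) := by
    intro q r
    have ht : M₂ᵀ = (1 / ((n : ℝ) * w)) • ∑ i, vecMulVec (ψ (u i)) (φ (x i)) := by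
      simp only [M₂]
      rw [Matrix.transpose_smul, Matrix.transpose_sum]
      simp only [vecMulVec_transpose']
    rw [ht, dot_smul_sum_vmv]
  have hM3 : ∀ q r : Fin bH → ℝ, q ⬝ᵥ (M₃ *ᵥ r)
      = (1 / ((n : ℝ) * w)) * ∑ i, (q ⬝ᵥ ψ (u i)) * (r ⬝ᵥ ψ (u i))
        + (1 / ((n' : ℝ) * (1 - w))) * ∑ i, (q ⬝ᵥ ψ (u' i)) * (r ⬝ᵥ ψ (u' i))
        + lam * (q ⬝ᵥ r) := by
    intro q r
    simp only [M₃]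
    rw [Matrix.add_mulVec, Matrix.add_mulVec, dotProduct_add, dotProduct_add,
      dot_smul_sum_vmv, dot_smul_sum_vmv,
      Matrix.smul_mulVec, Matrix.one_mulVec, dotProduct_smul, smul_eq_mul]
  have hb1 : ∀ q : Fin bH → ℝ, q ⬝ᵥ b₁
      = (1 / ((n' : ℝ) * (1 - w))) * ∑ i, y' i * (q ⬝ᵥ ψ (u' i)) := by
    intro q
    simp only [b₁]
    rw [dotProduct_smul, dotProduct_sum', smul_eq_mul]
    congr 1
    refine Finset.sum_congr rfl fun i _ => ?_
    rw [dotProduct_smul, smul_eq_mul]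
  -- M₁ is positive definite, hence a unit
  have hUM₁ : IsUnit M₁ := by
    refine isUnit_of_posForm M₁ fun v hv => ?_
    rw [hM1 v v]
    have h1 : 0 ≤ (1 / ((n : ℝ) * w)) * ∑ i, (v ⬝ᵥ φ (x i)) * (v ⬝ᵥ φ (x i)) :=
      mul_nonneg hc.le (Finset.sum_nonneg fun i _ => mul_self_nonneg _)
    have h2 : 0 < lam * (v ⬝ᵥ v) := mul_pos hlam (dotProduct_self_pos' hv)
    linarith
  have hdet1U : IsUnit M₁.det := (Matrix.isUnit_iff_isUnit_det M₁).1 hUM₁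
  -- block matrix
  have hMMform : ∀ (a : Fin bF → ℝ) (b : Fin bH → ℝ),
      Sum.elim a b ⬝ᵥ (Matrix.fromBlocks M₁ M₂ M₂ᵀ M₃ *ᵥ Sum.elim a b)
        = (1 / ((n : ℝ) * w)) * ∑ i, (a ⬝ᵥ φ (x i) + b ⬝ᵥ ψ (u i)) ^ 2
          + (1 / ((n' : ℝ) * (1 - w))) * ∑ i, (b ⬝ᵥ ψ (u' i)) ^ 2
          + lam * (a ⬝ᵥ a + b ⬝ᵥ b) := by
    intro a b
    rw [Matrix.fromBlocks_mulVec, sumElim_dotProduct_sumElim,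
      dotProduct_add, dotProduct_add]
    simp only [Sum.elim_comp_inl, Sum.elim_comp_inr]
    rw [hM1, hM2, hM2t, hM3]
    have hy1 : ∑ i, (a ⬝ᵥ φ (x i) + b ⬝ᵥ ψ (u i)) ^ 2
        = ∑ i, (a ⬝ᵥ φ (x i)) * (a ⬝ᵥ φ (x i)) + ∑ i, (a ⬝ᵥ φ (x i)) * (b ⬝ᵥ ψ (u i))
          + ∑ i, (b ⬝ᵥ ψ (u i)) * (a ⬝ᵥ φ (x i)) + ∑ i, (b ⬝ᵥ ψ (u i)) * (b ⬝ᵥ ψ (u i)) := by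
      rw [← Finset.sum_add_distrib, ← Finset.sum_add_distrib, ← Finset.sum_add_distrib]
      exact Finset.sum_congr rfl fun i _ => by ring
    have hy2 : ∑ i, (b ⬝ᵥ ψ (u' i)) ^ 2 = ∑ i, (b ⬝ᵥ ψ (u' i)) * (b ⬝ᵥ ψ (u' i)) :=
      Finset.sum_congr rfl fun i _ => sq (b ⬝ᵥ ψ (u' i)) ▸ by ring
    rw [hy1, hy2]
    ring
  have hUMM : IsUnit (Matrix.fromBlocks M₁ M₂ M₂ᵀ M₃) := by
    refine isUnit_of_posForm _ fun v hv => ?_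
    have hv' : v = Sum.elim (v ∘ Sum.inl) (v ∘ Sum.inr) := (Sum.elim_comp_inl_inr v).symm
    rw [hv', hMMform]
    set a := v ∘ Sum.inl
    set b := v ∘ Sum.inr
    have hab : a ≠ 0 ∨ b ≠ 0 := by
      by_contra h
      push_neg at h
      apply hv
      funext j
      cases j with
      | inl j => exact congrFun h.1 j
      | inr j => exact congrFun h.2 j
    have hpos : 0 < a ⬝ᵥ a + b ⬝ᵥ b := by
      rcases hab with h | h
      · exact add_pos_of_pos_of_nonneg (dotProduct_self_pos' h) (dotProduct_self_nonneg' b)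
      · exact add_pos_of_nonneg_of_pos (dotProduct_self_nonneg' a) (dotProduct_self_pos' h)
    have h1 : 0 ≤ (1 / ((n : ℝ) * w)) * ∑ i, (a ⬝ᵥ φ (x i) + b ⬝ᵥ ψ (u i)) ^ 2 :=
      mul_nonneg hc.le (Finset.sum_nonneg fun i _ => sq_nonneg _)
    have h2 : 0 ≤ (1 / ((n' : ℝ) * (1 - w))) * ∑ i, (b ⬝ᵥ ψ (u' i)) ^ 2 :=
      mul_nonneg hc'.le (Finset.sum_nonneg fun i _ => sq_nonneg _)
    nlinarith
  haveI : Invertible M₁ := M₁.invertibleOfIsUnitDet hdet1U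
  have hdetS : S.det ≠ 0 := by
    have hdet : (Matrix.fromBlocks M₁ M₂ M₂ᵀ M₃).det = M₁.det * S.det := by
      have h := Matrix.det_fromBlocks₁₁ M₁ M₂ M₂ᵀ M₃
      rwa [Matrix.invOf_eq_nonsing_inv] at h
    intro h0
    have : (Matrix.fromBlocks M₁ M₂ M₂ᵀ M₃).det = 0 := by rw [hdet, h0, mul_zero]
    exact (((Matrix.isUnit_iff_isUnit_det _).1 hUMM).ne_zero) this
  have hUS : IsUnit S := (Matrix.isUnit_iff_isUnit_det S).2 (isUnit_iff_ne_zero.2 hdetS)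
  have hdetSU : IsUnit S.det := isUnit_iff_ne_zero.2 hdetS
  -- stationarity
  have heq1 : M₁ *ᵥ α = M₂ *ᵥ β := by
    simp only [α]
    rw [Matrix.mulVec_mulVec, Matrix.mul_nonsing_inv _ hdet1U, Matrix.one_mulVec]
  have heq2 : M₃ *ᵥ β - M₂ᵀ *ᵥ α = b₁ := by
    have h' : M₂ᵀ *ᵥ α = (M₂ᵀ * M₁⁻¹ * M₂) *ᵥ β := by
      simp only [α]
      rw [Matrix.mulVec_mulVec, Matrix.mulVec_mulVec]
    rw [h', ← Matrix.sub_mulVec]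
    show S *ᵥ β = b₁
    simp only [β]
    rw [Matrix.mulVec_mulVec, Matrix.mul_nonsing_inv _ hdetSU, Matrix.one_mulVec]
  -- canonical form of J
  have hJ : ∀ (a : Fin bF → ℝ) (b : Fin bH → ℝ), J (a, b)
      = (1 / ((n : ℝ) * w)) * ∑ i, (a ⬝ᵥ φ (x i) - b ⬝ᵥ ψ (u i)) ^ 2
        + (1 / ((n' : ℝ) * (1 - w))) * ∑ i, (b ⬝ᵥ ψ (u' i) - y' i) ^ 2
        + lam * (a ⬝ᵥ a + b ⬝ᵥ b) := by
    intro a b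
    simp only [J]
    rw [mul_comm w (n : ℝ), mul_comm (1 - w) (n' : ℝ)]
  refine ⟨hUM₁, hUS, fun p => ?_⟩
  set da := p.1 - α with hda
  set db := p.2 - β with hdb
  -- expansions of the three pieces of J p
  have hsplit1 : ∑ i, (p.1 ⬝ᵥ φ (x i) - p.2 ⬝ᵥ ψ (u i)) ^ 2
      = ∑ i, (α ⬝ᵥ φ (x i) - β ⬝ᵥ ψ (u i)) ^ 2 + ∑ i, (da ⬝ᵥ φ (x i) - db ⬝ᵥ ψ (u i)) ^ 2
        + 2 * ∑ i, (α ⬝ᵥ φ (x i) - β ⬝ᵥ ψ (u i)) * (da ⬝ᵥ φ (x i) - db ⬝ᵥ ψ (u i)) := by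
    rw [Finset.mul_sum, ← Finset.sum_add_distrib, ← Finset.sum_add_distrib]
    refine Finset.sum_congr rfl fun i _ => ?_
    have h1 : p.1 ⬝ᵥ φ (x i) = α ⬝ᵥ φ (x i) + da ⬝ᵥ φ (x i) := by
      rw [hda, sub_dotProduct]; ring
    have h2 : p.2 ⬝ᵥ ψ (u i) = β ⬝ᵥ ψ (u i) + db ⬝ᵥ ψ (u i) := by
      rw [hdb, sub_dotProduct]; ring
    rw [h1, h2]; ring
  have hsplit2 : ∑ i, (p.2 ⬝ᵥ ψ (u' i) - y' i) ^ 2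
      = ∑ i, (β ⬝ᵥ ψ (u' i) - y' i) ^ 2 + ∑ i, (db ⬝ᵥ ψ (u' i)) ^ 2
        + 2 * ∑ i, (β ⬝ᵥ ψ (u' i) - y' i) * (db ⬝ᵥ ψ (u' i)) := by
    rw [Finset.mul_sum, ← Finset.sum_add_distrib, ← Finset.sum_add_distrib]
    refine Finset.sum_congr rfl fun i _ => ?_
    have h2 : p.2 ⬝ᵥ ψ (u' i) = β ⬝ᵥ ψ (u' i) + db ⬝ᵥ ψ (u' i) := by
      rw [hdb, sub_dotProduct]; ring
    rw [h2]; ring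
  have hp1 : p.1 = α + da := by rw [hda]; abel
  have hp2 : p.2 = β + db := by rw [hdb]; abel
  have hsplit3 : p.1 ⬝ᵥ p.1 = α ⬝ᵥ α + da ⬝ᵥ da + 2 * (da ⬝ᵥ α) := by
    rw [hp1, add_dotProduct, dotProduct_add, dotProduct_add,
      dotProduct_comm α da]
    ring
  have hsplit4 : p.2 ⬝ᵥ p.2 = β ⬝ᵥ β + db ⬝ᵥ db + 2 * (db ⬝ᵥ β) := by
    rw [hp2, add_dotProduct, dotProduct_add, dotProduct_add,
      dotProduct_comm β db]
    ring
  -- cross terms written with canonical atoms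
  have hx1 : ∑ i, (α ⬝ᵥ φ (x i) - β ⬝ᵥ ψ (u i)) * (da ⬝ᵥ φ (x i) - db ⬝ᵥ ψ (u i))
      = ∑ i, (da ⬝ᵥ φ (x i)) * (α ⬝ᵥ φ (x i)) - ∑ i, (da ⬝ᵥ φ (x i)) * (β ⬝ᵥ ψ (u i))
        - ∑ i, (db ⬝ᵥ ψ (u i)) * (α ⬝ᵥ φ (x i)) + ∑ i, (db ⬝ᵥ ψ (u i)) * (β ⬝ᵥ ψ (u i)) := by
    rw [← Finset.sum_sub_distrib, ← Finset.sum_sub_distrib, ← Finset.sum_add_distrib]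
    exact Finset.sum_congr rfl fun i _ => by ring
  have hx2 : ∑ i, (β ⬝ᵥ ψ (u' i) - y' i) * (db ⬝ᵥ ψ (u' i))
      = ∑ i, (db ⬝ᵥ ψ (u' i)) * (β ⬝ᵥ ψ (u' i)) - ∑ i, y' i * (db ⬝ᵥ ψ (u' i)) := by
    rw [← Finset.sum_sub_distrib]
    exact Finset.sum_congr rfl fun i _ => by ring
  -- the stationarity conditions in scalar form
  have h1 : da ⬝ᵥ (M₁ *ᵥ α) - da ⬝ᵥ (M₂ *ᵥ β) = 0 := by rw [heq1, sub_self]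
  rw [hM1, hM2] at h1
  have h2 : db ⬝ᵥ (M₃ *ᵥ β) - db ⬝ᵥ (M₂ᵀ *ᵥ α) = db ⬝ᵥ b₁ := by
    rw [← dotProduct_sub, heq2]
  rw [hM3, hM2t, hb1] at h2
  -- the main decomposition of J p
  have hmain : J p = J (α, β)
      + ((1 / ((n : ℝ) * w)) * ∑ i, (da ⬝ᵥ φ (x i) - db ⬝ᵥ ψ (u i)) ^ 2
        + (1 / ((n' : ℝ) * (1 - w))) * ∑ i, (db ⬝ᵥ ψ (u' i)) ^ 2
        + lam * (da ⬝ᵥ da + db ⬝ᵥ db)) := by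
    have hJp : J p = J (p.1, p.2) := rfl
    rw [hJp, hJ p.1 p.2, hJ α β, hsplit1, hsplit2, hsplit3, hsplit4, hx1, hx2]
    linear_combination (2 : ℝ) * h1 + 2 * h2
  -- nonnegativity of the quadratic remainder
  have q1 : 0 ≤ (1 / ((n : ℝ) * w)) * ∑ i, (da ⬝ᵥ φ (x i) - db ⬝ᵥ ψ (u i)) ^ 2 :=
    mul_nonneg hc.le (Finset.sum_nonneg fun i _ => sq_nonneg _)
  have q2 : 0 ≤ (1 / ((n' : ℝ) * (1 - w))) * ∑ i, (db ⬝ᵥ ψ (u' i)) ^ 2 :=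
    mul_nonneg hc'.le (Finset.sum_nonneg fun i _ => sq_nonneg _)
  have qd1 : 0 ≤ da ⬝ᵥ da := dotProduct_self_nonneg' da
  have qd2 : 0 ≤ db ⬝ᵥ db := dotProduct_self_nonneg' db
  have q3 : 0 ≤ lam * (da ⬝ᵥ da + db ⬝ᵥ db) := mul_nonneg hlam.le (add_nonneg qd1 qd2)
  constructor
  · rw [hmain]; linarith
  · intro heq
    rw [hmain] at heq
    have hz : lam * (da ⬝ᵥ da + db ⬝ᵥ db) = 0 := by linarith
    have hz2 : da ⬝ᵥ da + db ⬝ᵥ db = 0 := by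
      rcases mul_eq_zero.1 hz with h | h
      · exact absurd h hlam.ne'
      · exact h
    have hda0 : da = 0 := dotProduct_self_eq_zero.mp (by linarith)
    have hdb0 : db = 0 := dotProduct_self_eq_zero.mp (by linarith)
    have e1 : p.1 = α := by
      have := hda ▸ hda0
      exact sub_eq_zero.mp this
    have e2 : p.2 = β := by
      have := hdb ▸ hdb0
      exact sub_eq_zero.mp this
    exact Prod.ext e1 e2
end

section
/- Let X be a real-valued random variable whose distribution is symmetric (X and −X have the same law) with E[X²] = σ² ∈ (0, ∞), let U be an ℝ^{d_U}-valued random variable independent of X, let θ ∈ ℝ, and set Y := θX. Then: (i) the joint law of (U, Y) = (U, θX) equals the joint law of (U, −θX), i.e., the (U, Y)-marginal is the same for parameter θ and for parameter −θ; (ii) E[Y | U] = 0 almost surely and E[Y | U, X] = θX almost surely, so that E[(E[Y | U] − E[Y | U, X])²] = θ²σ²; and (iii) E[(E[Y_θ | X] − E[Y_{−θ} | X])²] = 4θ²σ², where Y_θ := θX and Y_{−θ} := −θX. -/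
open MeasureTheory ProbabilityTheory

/-- two-point construction in the paper's minimax lower bound.
For `X` symmetric with `E[X²] = σ² ∈ (0,∞)`, `U` independent of `X`, and `Y := θX`:
(i) the `(U, Y)`-marginal is the same for parameter `θ` and `−θ`;
(ii) `E[Y|U] = 0` a.s., `E[Y|U,X] = θX` a.s., and `E[(E[Y|U] − E[Y|U,X])²] = θ²σ²`;
(iii) `E[(E[Y_θ|X] − E[Y_{−θ}|X])²] = 4θ²σ²`. -/
theorem leCam_two_point_construction
    {Ω : Type*} [MeasurableSpace Ω] (μ : Measure Ω) [IsProbabilityMeasure μ]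
    {dU : ℕ}
    (X : Ω → ℝ) (U : Ω → (Fin dU → ℝ))
    (hX : Measurable X) (hU : Measurable U)
    (hsymm : μ.map X = μ.map (fun ω => -X ω))
    (hX2 : MemLp X 2 μ)
    (σ2 : ℝ) (hσ2 : 0 < σ2) (hmom : ∫ ω, (X ω) ^ 2 ∂μ = σ2)
    (hindep : IndepFun X U μ)
    (θ : ℝ) :
    (μ.map (fun ω => (U ω, θ * X ω)) = μ.map (fun ω => (U ω, -θ * X ω)))
    ∧ ((μ[fun ω => θ * X ω | MeasurableSpace.comap U inferInstance]) =ᵐ[μ] 0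
        ∧ (μ[fun ω => θ * X ω
            | MeasurableSpace.comap (fun ω' => (U ω', X ω')) inferInstance])
          =ᵐ[μ] (fun ω => θ * X ω)
        ∧ ∫ ω, ((μ[fun ω' => θ * X ω' | MeasurableSpace.comap U inferInstance]) ω
            - (μ[fun ω' => θ * X ω'
                | MeasurableSpace.comap (fun ω'' => (U ω'', X ω'')) inferInstance]) ω) ^ 2 ∂μ
          = θ ^ 2 * σ2)
    ∧ ∫ ω, ((μ[fun ω' => θ * X ω' | MeasurableSpace.comap X inferInstance]) ω
        - (μ[fun ω' => -θ * X ω' | MeasurableSpace.comap X inferInstance]) ω) ^ 2 ∂μ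
      = 4 * θ ^ 2 * σ2 := by
  have hXint : Integrable X μ := hX2.integrable (by norm_num)
  have hX2int : Integrable (fun ω => X ω ^ 2) μ := by
    simpa [sq] using hX2.integrable_sq
  -- E[X] = 0 from symmetry
  have hEX : ∫ ω, X ω ∂μ = 0 := by
    have h1 : ∫ ω, X ω ∂μ = ∫ x, x ∂(μ.map X) :=
      (integral_map hX.aemeasurable measurable_id.aestronglyMeasurable).symm
    have h2 : ∫ x, x ∂(μ.map (fun ω => -X ω)) = ∫ ω, -X ω ∂μ :=
      integral_map hX.neg.aemeasurable measurable_id.aestronglyMeasurable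
    have h3 : ∫ ω, -X ω ∂μ = ∫ ω, X ω ∂μ := by rw [← h2, ← hsymm, ← h1]
    rw [integral_neg] at h3
    linarith
  -- measurability of pieces
  have hθX : Measurable fun ω => θ * X ω := hX.const_mul θ
  have hθXint : Integrable (fun ω => θ * X ω) μ := hXint.const_mul θ
  -- Part (i)
  have hmapθ : ∀ c : ℝ, μ.map (fun ω => c * X ω) = (μ.map X).map (fun x => c * x) := by
    intro c
    rw [Measure.map_map (measurable_const_mul c) hX]
    rfl
  have hmap_eq : μ.map (fun ω => θ * X ω) = μ.map (fun ω => -θ * X ω) := by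
    rw [hmapθ θ, hsymm, Measure.map_map (f := fun ω => -X ω) (measurable_const_mul θ) hX.neg]
    congr 1
    funext ω
    simp [Function.comp]
  have part1 : μ.map (fun ω => (U ω, θ * X ω)) = μ.map (fun ω => (U ω, -θ * X ω)) := by
    have hUθ : IndepFun U (fun ω => θ * X ω) μ :=
      hindep.symm.comp measurable_id (measurable_const_mul θ)
    have hUθ' : IndepFun U (fun ω => -θ * X ω) μ :=
      hindep.symm.comp measurable_id (measurable_const_mul (-θ))
    rw [(indepFun_iff_map_prod_eq_prod_map_map hU.aemeasurable hθX.aemeasurable).mp hUθ,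
      (indepFun_iff_map_prod_eq_prod_map_map hU.aemeasurable
        (hX.const_mul (-θ)).aemeasurable).mp hUθ', hmap_eq]
  -- conditional expectations
  have hleU : MeasurableSpace.comap U inferInstance ≤ (inferInstance : MeasurableSpace Ω) :=
    hU.comap_le
  have hleUX : MeasurableSpace.comap (fun ω' => (U ω', X ω')) inferInstance
      ≤ (inferInstance : MeasurableSpace Ω) := (hU.prodMk hX).comap_le
  have hleX : MeasurableSpace.comap X inferInstance ≤ (inferInstance : MeasurableSpace Ω) :=
    hX.comap_le
  haveI : SigmaFinite (μ.trim hleU) := (isFiniteMeasure_trim hleU).toSigmaFinite _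
  -- E[θX|U] = 0
  have hcondU : (μ[fun ω => θ * X ω | MeasurableSpace.comap U inferInstance]) =ᵐ[μ] 0 := by
    have hXm : Measurable[MeasurableSpace.comap X inferInstance] X :=
      Measurable.of_comap_le le_rfl
    have hsm : StronglyMeasurable[MeasurableSpace.comap X inferInstance]
        (fun ω => θ * X ω) := (hXm.const_mul θ).stronglyMeasurable
    have h := condExp_indep_eq hleX hleU hsm hindep
    refine h.trans ?_
    have : ∫ ω, θ * X ω ∂μ = 0 := by rw [integral_const_mul, hEX, mul_zero]
    rw [this]; rfl
  -- E[θX|U,X] = θX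
  have hcondUX : (μ[fun ω => θ * X ω
      | MeasurableSpace.comap (fun ω' => (U ω', X ω')) inferInstance])
      =ᵐ[μ] (fun ω => θ * X ω) := by
    have hm : Measurable[MeasurableSpace.comap (fun ω' => (U ω', X ω')) inferInstance]
        (fun ω' => (U ω', X ω')) := Measurable.of_comap_le le_rfl
    have hsm : StronglyMeasurable[MeasurableSpace.comap (fun ω' => (U ω', X ω'))
        inferInstance] (fun ω => θ * X ω) :=
      ((measurable_snd.comp hm).const_mul θ).stronglyMeasurable
    rw [condExp_of_stronglyMeasurable hleUX hsm hθXint]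
  -- E[cX|X] = cX
  have hcondX : ∀ c : ℝ, (μ[fun ω' => c * X ω' | MeasurableSpace.comap X inferInstance])
      =ᵐ[μ] (fun ω => c * X ω) := by
    intro c
    have hXm : Measurable[MeasurableSpace.comap X inferInstance] X :=
      Measurable.of_comap_le le_rfl
    rw [condExp_of_stronglyMeasurable hleX (hXm.const_mul c).stronglyMeasurable
      (hXint.const_mul c)]
  -- integral for (ii)
  have hint2 : ∫ ω, ((μ[fun ω' => θ * X ω' | MeasurableSpace.comap U inferInstance]) ω
      - (μ[fun ω' => θ * X ω'
          | MeasurableSpace.comap (fun ω'' => (U ω'', X ω'')) inferInstance]) ω) ^ 2 ∂μ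
      = θ ^ 2 * σ2 := by
    have hae : (fun ω => ((μ[fun ω' => θ * X ω'
        | MeasurableSpace.comap U inferInstance]) ω
        - (μ[fun ω' => θ * X ω'
            | MeasurableSpace.comap (fun ω'' => (U ω'', X ω'')) inferInstance]) ω) ^ 2)
        =ᵐ[μ] fun ω => θ ^ 2 * X ω ^ 2 := by
      filter_upwards [hcondU, hcondUX] with ω h1 h2
      rw [h1, h2]
      simp; ring
    rw [integral_congr_ae hae, integral_const_mul, hmom]
  -- integral for (iii)
  have hint3 : ∫ ω, ((μ[fun ω' => θ * X ω' | MeasurableSpace.comap X inferInstance]) ω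
      - (μ[fun ω' => -θ * X ω' | MeasurableSpace.comap X inferInstance]) ω) ^ 2 ∂μ
      = 4 * θ ^ 2 * σ2 := by
    have hae : (fun ω => ((μ[fun ω' => θ * X ω' | MeasurableSpace.comap X inferInstance]) ω
        - (μ[fun ω' => -θ * X ω' | MeasurableSpace.comap X inferInstance]) ω) ^ 2)
        =ᵐ[μ] fun ω => 4 * θ ^ 2 * X ω ^ 2 := by
      filter_upwards [hcondX θ, hcondX (-θ)] with ω h1 h2
      rw [h1, h2]
      ring
    rw [integral_congr_ae hae, integral_const_mul, hmom]
  exact ⟨part1, ⟨hcondU, hcondUX, hint2⟩, hint3⟩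
end
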